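/- arXiv:1505.07581 — 2 statements merged into one kernel-verified Lean document; each statement's English description precedes it below -/
import Mathlib

section
/- Let P and Q be finite posets. (a) Every minimal prime ideal of L(P,Q) has height at least |Q|, and there exists a minimal prime of L(P,Q) of height exactly |Q|. (b) For an order-preserving map ψ : Q → P, the prime ideal 𝔭_ψ = (x_{ψ(q),q} : q ∈ Q) is a minimal prime of L(P,Q) if and only if for every order-preserving map φ : P → Q the composite map ψ∘φ : P → P has a fixed point. In particular, height(L(P,Q)) = |Q| and dim K[P,Q] = |Q|·(|P|−1). -/
open MvPolynomial

set_option maxHeartbeats 1000000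
set_option synthInstance.maxHeartbeats 1000000

noncomputable section

attribute [local instance] Classical.propDecidable

/-! ### Poset notions -/

/-- The comparability graph of a poset; it has the same connected components as
the Hasse diagram of a finite poset. -/
def compGraph (P : Type) [PartialOrder P] : SimpleGraph P where
  Adj p q := p ≠ q ∧ (p ≤ q ∨ q ≤ p)
  symm := ⟨fun _ _ h => ⟨h.1.symm, h.2.symm⟩⟩
  loopless := ⟨fun _ h => h.1 rfl⟩

/-- A poset is connected if its Hasse diagram is connected as a graph. -/
def PosetConnected (P : Type) [PartialOrder P] : Prop := (compGraph P).Connected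

/-- The number of connected components of a poset. -/
def numComponents (P : Type) [PartialOrder P] : ℕ :=
  Nat.card (compGraph P).ConnectedComponent

/-- The underlying set of a connected component of a poset. -/
def ccSet {P : Type} [PartialOrder P] (c : (compGraph P).ConnectedComponent) : Set P :=
  {p | (compGraph P).connectedComponentMk p = c}

/-- A poset is a chain if it is totally ordered. -/
def IsChainPoset (P : Type) [PartialOrder P] : Prop := ∀ a b : P, a ≤ b ∨ b ≤ a

/-- A poset is an antichain if its elements are pairwise incomparable. -/
def IsAntichainPoset (P : Type) [PartialOrder P] : Prop :=
  IsAntichain (· ≤ ·) (Set.univ : Set P)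

/-- A poset is rooted if no two incomparable elements have a common upper bound. -/
def IsRooted (P : Type) [PartialOrder P] : Prop :=
  ∀ p₁ p₂ p : P, ¬ p₁ ≤ p₂ → ¬ p₂ ≤ p₁ → ¬ (p₁ < p ∧ p₂ < p)

/-- A poset is co-rooted if no two incomparable elements have a common lower bound. -/
def IsCorooted (P : Type) [PartialOrder P] : Prop :=
  ∀ p₁ p₂ p : P, ¬ p₁ ≤ p₂ → ¬ p₂ ≤ p₁ → ¬ (p < p₁ ∧ p < p₂)

/-- A poset is a disjoint union of chains iff any two elements in the same connected
component are comparable. -/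
def IsDisjointUnionOfChains (P : Type) [PartialOrder P] : Prop :=
  ∀ p q : P, (compGraph P).Reachable p q → (p ≤ q ∨ q ≤ p)

/-- `𝔞(P)`: the maximal cardinality of an antichain in `P`. -/
def maxAntichainCard (P : Type) [PartialOrder P] : ℕ :=
  sSup {n | ∃ A : Finset P, IsAntichain (· ≤ ·) (A : Set P) ∧ A.card = n}

/-- The number of antichains of cardinality `k` in `P`. -/
def antichainCount (P : Type) [PartialOrder P] (k : ℕ) : ℕ :=
  Nat.card {A : Finset P // IsAntichain (· ≤ ·) (A : Set P) ∧ A.card = k}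

/-- The number of maximal elements of `P`. -/
def maxElemCount (P : Type) [PartialOrder P] : ℕ := Nat.card {p : P // ∀ q, ¬ p < q}

/-- The number of minimal elements of `P`. -/
def minElemCount (P : Type) [PartialOrder P] : ℕ := Nat.card {p : P // ∀ q, ¬ q < p}

def HasUniqueMinimal (P : Type) [PartialOrder P] : Prop := ∃! p : P, ∀ q, ¬ q < p
def HasUniqueMaximal (P : Type) [PartialOrder P] : Prop := ∃! p : P, ∀ q, ¬ p < q

/-! ### The ideals `L(P,Q)` -/

/-- The ideal `L(P,Q)` generated by the monomials `u_φ = ∏_p x_{p,φ(p)}`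
for order-preserving maps `φ : P → Q`. -/
def LPQ (K : Type) [Field K] (P Q : Type) [PartialOrder P] [PartialOrder Q] [Fintype P] :
    Ideal (MvPolynomial (P × Q) K) :=
  Ideal.span (Set.range fun φ : P →o Q => ∏ p : P, (X (p, φ p) : MvPolynomial (P × Q) K))

/-- `L(A,B)` for subposets `A ⊆ P`, `B ⊆ Q`, regarded as an ideal of `S_{P,Q}`. -/
def LOn (K : Type) [Field K] (P Q : Type) [PartialOrder P] [PartialOrder Q] [Finite P]
    (A : Set P) (B : Set Q) : Ideal (MvPolynomial (P × Q) K) :=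
  letI : Fintype A := Fintype.ofFinite A
  Ideal.span (Set.range fun φ : A →o B =>
    ∏ p : A, (X ((p : P), (φ p : Q)) : MvPolynomial (P × Q) K))

/-- `L(Q,P)^τ ⊆ S_{P,Q}`: the ideal generated by `∏_q x_{ψ(q),q}` for order-preserving
`ψ : Q → P` (i.e. `L(Q,P)` with the indices of the variables switched). -/
def LQPtau (K : Type) [Field K] (P Q : Type) [PartialOrder P] [PartialOrder Q] [Fintype Q] :
    Ideal (MvPolynomial (P × Q) K) :=
  Ideal.span (Set.range fun ψ : Q →o P => ∏ q : Q, (X (ψ q, q) : MvPolynomial (P × Q) K))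

/-! ### Monomial ideals -/

/-- A monomial ideal. -/
def IsMonomialIdeal {K : Type} [Field K] {σ : Type} (I : Ideal (MvPolynomial σ K)) : Prop :=
  ∃ A : Set (σ →₀ ℕ), I = Ideal.span ((fun a => (monomial a (1 : K) : MvPolynomial σ K)) '' A)

/-- `x^a` is a minimal monomial generator of the monomial ideal `I`. -/
def IsMinGen {K : Type} [Field K] {σ : Type} (I : Ideal (MvPolynomial σ K)) (a : σ →₀ ℕ) : Prop :=
  (monomial a (1 : K) : MvPolynomial σ K) ∈ I ∧
    ∀ b : σ →₀ ℕ, b ≤ a → b ≠ a → (monomial b (1 : K) : MvPolynomial σ K) ∉ I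

/-! ### Minimal multigraded free resolutions and Betti numbers -/

/-- A minimal multigraded free resolution of `S/I` for an ideal
`I ⊆ S = K[x_v : v ∈ σ]` (with the fine `ℕ^σ`-grading): the zeroth free module is `S`
itself, `d0` maps `F_1` onto `I ⊆ S`, the complex is exact elsewhere, all entries of the
matrices of the higher differentials lie in the irrelevant maximal ideal (zero constant
term), and all maps are homogeneous with respect to the assigned multidegrees `deg`. -/
structure MGMinRes {K : Type} [Field K] {σ : Type} (I : Ideal (MvPolynomial σ K)) where
  B : ℕ → Type
  finB : ∀ i, Fintype (B i)
  deg : ∀ i, B i → (σ →₀ ℕ)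
  d0 : (B 0 →₀ MvPolynomial σ K) →ₗ[MvPolynomial σ K] MvPolynomial σ K
  d : ∀ i, (B (i+1) →₀ MvPolynomial σ K) →ₗ[MvPolynomial σ K] (B i →₀ MvPolynomial σ K)
  range_d0 : LinearMap.range d0 = I
  exact0 : LinearMap.ker d0 = LinearMap.range (d 0)
  exactd : ∀ i, LinearMap.ker (d i) = LinearMap.range (d (i+1))
  min_d : ∀ i b b', constantCoeff ((d i (Finsupp.single b 1)) b') = 0
  hom0 : ∀ b m, m ∈ (d0 (Finsupp.single b 1)).support → m = deg 0 b
  homd : ∀ i (b : B (i+1)) (b' : B i) m,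
    m ∈ ((d i (Finsupp.single b 1)) b').support → m + deg i b' = deg (i+1) b

namespace MGMinRes

variable {K : Type} [Field K] {σ : Type} {I : Ideal (MvPolynomial σ K)}

/-- The total Betti number `β_i(S/I)`. -/
def betaT (F : MGMinRes I) : ℕ → ℕ
  | 0 => 1
  | i+1 => Nat.card (F.B i)

/-- The multigraded Betti number `β_{i,a}(S/I)`. -/
def beta (F : MGMinRes I) : ℕ → (σ →₀ ℕ) → ℕ
  | 0, a => if a = 0 then 1 else 0
  | i+1, a => Nat.card {b : F.B i // F.deg i b = a}

/-- The graded Betti number `β_{i,j}(S/I)`. -/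
def betaG (F : MGMinRes I) : ℕ → ℕ → ℕ
  | 0, j => if j = 0 then 1 else 0
  | i+1, j => Nat.card {b : F.B i // (F.deg i b).sum (fun _ n => n) = j}

/-- The projective dimension of `S/I`. -/
def pdim (F : MGMinRes I) : ℕ := sSup {i | F.betaT i ≠ 0}

/-- The Castelnuovo–Mumford regularity of `S/I`. -/
def reg (F : MGMinRes I) : ℕ := sSup {d | ∃ i j, F.betaG i j ≠ 0 ∧ j = i + d}

/-- The minimal degree of a generator of `I`. -/
def minDegGen (F : MGMinRes I) : ℕ := sInf {j | F.betaG 1 j ≠ 0}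

/-- The length of the linear strand of `S/I`:
`lin(S/I) = max { i : β_{i,i+d-1}(S/I) ≠ 0 }` where `d` is the minimal degree
of a generator of `I`. -/
def lin (F : MGMinRes I) : ℕ := sSup {i | F.betaG i (i + F.minDegGen - 1) ≠ 0}

end MGMinRes

/-- `I` has a linear resolution. -/
def HasLinearResolution {K : Type} [Field K] {σ : Type} (I : Ideal (MvPolynomial σ K)) : Prop :=
  ∀ F : MGMinRes I, ∀ i j, 1 ≤ i → j ≠ i + F.minDegGen - 1 → F.betaG i j = 0

/-- A minimal free resolution of a module `M` over a ring `A`, with minimality taken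
with respect to the (maximal) ideal `𝔪`. -/
structure MinFreeResMod (A : Type) [CommRing A] (𝔪 : Ideal A)
    (M : Type) [AddCommGroup M] [Module A M] where
  B : ℕ → Type
  finB : ∀ i, Fintype (B i)
  aug : (B 0 →₀ A) →ₗ[A] M
  d : ∀ i, (B (i+1) →₀ A) →ₗ[A] (B i →₀ A)
  aug_surj : Function.Surjective aug
  exact0 : LinearMap.ker aug = LinearMap.range (d 0)
  exactd : ∀ i, LinearMap.ker (d i) = LinearMap.range (d (i+1))
  min_d : ∀ i b b', (d i (Finsupp.single b 1)) b' ∈ 𝔪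

/-- The `i`-th Betti number of `M` over `A`, i.e. `dim_K Tor_i^A(M, A/𝔪)`. -/
def MinFreeResMod.betti {A : Type} [CommRing A] {𝔪 : Ideal A}
    {M : Type} [AddCommGroup M] [Module A M] (F : MinFreeResMod A 𝔪 M) (i : ℕ) : ℕ :=
  Nat.card (F.B i)

/-! ### Depth, dimension, Cohen–Macaulayness and friends -/

/-- The depth of `M` with respect to `𝔪`: the supremum of the lengths of
`M`-regular sequences contained in `𝔪`. -/
def depthOf (A : Type) [CommRing A] (𝔪 : Ideal A) (M : Type) [AddCommGroup M]
    [Module A M] : ℕ :=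
  sSup {n | ∃ rs : List A, rs.length = n ∧ (∀ r ∈ rs, r ∈ 𝔪) ∧
    RingTheory.Sequence.IsRegular M rs}

/-- The Krull dimension of a module (the dimension of its support). -/
def moduleKDim (A : Type) [CommRing A] (M : Type) [AddCommGroup M] [Module A M] :
    WithBot ℕ∞ :=
  Order.krullDim (Module.support A M)

/-- `M` is a Cohen–Macaulay `A`-module (w.r.t. the distinguished ideal `𝔪`):
depth equals Krull dimension. -/
def ModCM (A : Type) [CommRing A] (𝔪 : Ideal A) (M : Type) [AddCommGroup M]
    [Module A M] : Prop :=
  (depthOf A 𝔪 M : WithBot ℕ∞) = moduleKDim A M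

/-- The irrelevant maximal ideal of `S/I`. -/
def irrel {K : Type} [Field K] {σ : Type} (I : Ideal (MvPolynomial σ K)) :
    Ideal (MvPolynomial σ K ⧸ I) :=
  Ideal.map (Ideal.Quotient.mk I) (Ideal.span (Set.range (X : σ → MvPolynomial σ K)))

/-- `S/I` is Cohen–Macaulay. -/
def IsCMQuot {K : Type} [Field K] {σ : Type} (I : Ideal (MvPolynomial σ K)) : Prop :=
  ModCM (MvPolynomial σ K ⧸ I) (irrel I) (MvPolynomial σ K ⧸ I)

/-- The height of an ideal: the infimum of the heights of the primes containing it. -/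
def idealHeight {A : Type} [CommRing A] (I : Ideal A) : ℕ∞ :=
  sInf {h | ∃ p : PrimeSpectrum A, I ≤ p.asIdeal ∧ Order.height p = h}

/-- An ideal is unmixed if all its associated primes have the same height. -/
def UnmixedIdeal {A : Type} [CommRing A] (I : Ideal A) : Prop :=
  ∀ p ∈ associatedPrimes A (A ⧸ I), ∀ q ∈ associatedPrimes A (A ⧸ I),
    idealHeight p = idealHeight q

/-- The Alexander dual of a squarefree monomial ideal: the ideal generated by the
products of the variables in the minimal primes of `I`. -/
def alexDual {K : Type} [Field K] {σ : Type} [Finite σ] (I : Ideal (MvPolynomial σ K)) :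
    Ideal (MvPolynomial σ K) :=
  Ideal.span ((fun p : Ideal (MvPolynomial σ K) =>
      ∏ v ∈ (Set.toFinite {v : σ | (X v : MvPolynomial σ K) ∈ p}).toFinset,
        (X v : MvPolynomial σ K)) '' I.minimalPrimes)

/-- `S/I` satisfies Serre's condition `(S_r)`. -/
def SerreSr {K : Type} [Field K] {σ : Type} (I : Ideal (MvPolynomial σ K)) (r : ℕ) : Prop :=
  ∀ p : PrimeSpectrum (MvPolynomial σ K ⧸ I),
    min (r : ℕ∞) (Order.height p) ≤
      (depthOf (Localization.AtPrime p.asIdeal) (IsLocalRing.maximalIdeal _)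
        (Localization.AtPrime p.asIdeal) : ℕ∞)

/-- A submodule of `S/I` is homogeneous (graded) for the standard grading. -/
def IsHomogSub {K : Type} [Field K] {σ : Type} (I : Ideal (MvPolynomial σ K))
    (N : Submodule (MvPolynomial σ K ⧸ I) (MvPolynomial σ K ⧸ I)) : Prop :=
  ∀ f : MvPolynomial σ K, Ideal.Quotient.mk I f ∈ N →
    ∀ n : ℕ, Ideal.Quotient.mk I (homogeneousComponent n f) ∈ N

/-- `S/I` is sequentially Cohen–Macaulay: there is a finite filtration by graded
submodules whose successive quotients are Cohen–Macaulay of strictly increasing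
Krull dimension. -/
def SeqCM {K : Type} [Field K] {σ : Type} (I : Ideal (MvPolynomial σ K)) : Prop :=
  ∃ (r : ℕ) (Mf : ℕ → Submodule (MvPolynomial σ K ⧸ I) (MvPolynomial σ K ⧸ I)),
    Mf 0 = ⊥ ∧ Mf r = ⊤ ∧ (∀ i < r, Mf i < Mf (i+1)) ∧
    (∀ i ≤ r, IsHomogSub I (Mf i)) ∧
    (∀ i < r, ModCM (MvPolynomial σ K ⧸ I) (irrel I)
      (↥(Mf (i+1)) ⧸ (Submodule.comap (Mf (i+1)).subtype (Mf i)))) ∧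
    (∀ i, i + 1 < r →
      moduleKDim (MvPolynomial σ K ⧸ I)
          (↥(Mf (i+1)) ⧸ (Submodule.comap (Mf (i+1)).subtype (Mf i))) <
      moduleKDim (MvPolynomial σ K ⧸ I)
          (↥(Mf (i+2)) ⧸ (Submodule.comap (Mf (i+2)).subtype (Mf (i+1)))))

/-- `S/I` is locally Cohen–Macaulay: every localization at a prime other than the
irrelevant maximal ideal is Cohen–Macaulay. -/
def LocallyCMQuot {K : Type} [Field K] {σ : Type} (I : Ideal (MvPolynomial σ K)) : Prop :=
  ∀ p : PrimeSpectrum (MvPolynomial σ K ⧸ I), p.asIdeal ≠ irrel I →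
    ModCM (Localization.AtPrime p.asIdeal) (IsLocalRing.maximalIdeal _)
      (Localization.AtPrime p.asIdeal)

/-! ### The Stanley–Reisner complex of a squarefree monomial ideal, shellability -/

/-- `F` is a face of the Stanley–Reisner complex of `I`. -/
def SRFace {K : Type} [Field K] {σ : Type} (I : Ideal (MvPolynomial σ K))
    (F : Finset σ) : Prop :=
  (∏ v ∈ F, (X v : MvPolynomial σ K)) ∉ I

/-- `F` is a facet of the Stanley–Reisner complex of `I`. -/
def SRFacet {K : Type} [Field K] {σ : Type} (I : Ideal (MvPolynomial σ K))
    (F : Finset σ) : Prop :=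
  SRFace I F ∧ ∀ G, SRFace I G → F ⊆ G → F = G

/-- The Stanley–Reisner complex of `I` is shellable: its facets admit an ordering
`F_1, …, F_m` such that for every `j > 1`, `F_j ∩ (F_1 ∪ ⋯ ∪ F_{j-1})` is a nonempty
union of facets of the boundary of `F_j`. -/
def SRShellable {K : Type} [Field K] {σ : Type} (I : Ideal (MvPolynomial σ K)) : Prop :=
  ∃ (m : ℕ) (e : Fin m ≃ {F : Finset σ // SRFacet I F}),
    ∀ j : Fin m, 0 < (j : ℕ) →
      ∃ 𝒢 : Set (Finset σ), 𝒢.Nonempty ∧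
        (∀ G ∈ 𝒢, G ⊆ (e j : Finset σ) ∧ G.card + 1 = (e j : Finset σ).card) ∧
        (∀ H : Finset σ,
          (H ⊆ (e j : Finset σ) ∧ ∃ i : Fin m, i < j ∧ H ⊆ (e i : Finset σ)) ↔
          ∃ G ∈ 𝒢, H ⊆ G)

/-- The Stanley–Reisner complex of `I` is pure. -/
def SRPure {K : Type} [Field K] {σ : Type} (I : Ideal (MvPolynomial σ K)) : Prop :=
  ∀ F G : Finset σ, SRFacet I F → SRFacet I G → F.card = G.card

/-! ### Weakly polymatroidal ideals and linear quotients -/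

/-- `I` is weakly polymatroidal with respect to the given linear order on the
variables (larger = earlier, i.e. `x_1 > x_2 > ⋯`). -/
def WeaklyPolymatroidal {K : Type} [Field K] {σ : Type} [LinearOrder σ]
    (I : Ideal (MvPolynomial σ K)) : Prop :=
  ∀ a b : σ →₀ ℕ, IsMinGen I a → IsMinGen I b →
    ∀ t : σ, (∀ s, t < s → a s = b s) → b t < a t →
      ∃ l, l < t ∧ b l ≠ 0 ∧
        (monomial (b + Finsupp.single t 1 - Finsupp.single l 1) (1 : K) :
          MvPolynomial σ K) ∈ I

/-- `I` has linear quotients. -/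
def HasLinearQuotients {K : Type} [Field K] {σ : Type} (I : Ideal (MvPolynomial σ K)) : Prop :=
  ∃ (r : ℕ) (e : Fin r ≃ {a : σ →₀ ℕ // IsMinGen I a}),
    ∀ i : Fin r, ∃ V : Set σ,
      Submodule.colon
        (Ideal.span ((fun j : Fin r =>
          (monomial ((e j : σ →₀ ℕ)) (1 : K) : MvPolynomial σ K)) '' {j | j < i}))
        (Ideal.span {(monomial ((e i : σ →₀ ℕ)) (1 : K) : MvPolynomial σ K)})
      = Ideal.span ((fun v => (X v : MvPolynomial σ K)) '' V)

end

noncomputable section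

/-- Order-preserving multivalued maps from `Q` to `P`, encoded as subsets of `Q × P`. -/
def MHomCond (P Q : Type) [PartialOrder P] [PartialOrder Q] (ψ : Set (Q × P)) : Prop :=
  (∀ q : Q, ∃ p : P, (q, p) ∈ ψ) ∧
  (∀ q q' : Q, q < q' → ∃ p p' : P, (q, p) ∈ ψ ∧ (q', p') ∈ ψ ∧ p < p')

/-- The monomial prime ideal `𝔭_ψ = (x_{p,q} : (q,p) ∈ ψ)` attached to `ψ ⊆ Q × P`. -/
def pPsi (K : Type) [Field K] {P Q : Type} (ψ : Set (Q × P)) :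
    Ideal (MvPolynomial (P × Q) K) :=
  Ideal.span ((fun qp : Q × P => (MvPolynomial.X (qp.2, qp.1) : MvPolynomial (P × Q) K)) '' ψ)

end
noncomputable section AuxStmt4

attribute [local instance] Classical.propDecidable

/-- Any `N+1` polynomials in at most `N` variables are algebraically dependent. -/
theorem aux_algdep (K : Type) [Field K] (σ : Type) [Fintype σ] (N : ℕ)
    (hN : Fintype.card σ ≤ N) (f : Fin (N + 1) → MvPolynomial σ K) :
    ∃ Q : MvPolynomial (Fin (N + 1)) K, Q ≠ 0 ∧ aeval f Q = 0 := by
  classical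
  set D : ℕ := (Finset.univ.sup fun i => (f i).totalDegree) + 1 with hD
  set c : ℕ := (N + 1) * D with hc
  set d : ℕ := (c + 1) ^ N + 1 with hd
  have hd1 : 1 ≤ d := Nat.le_add_left 1 _
  set M : ℕ := c * d with hM
  -- the index type
  set ι := (Fin (N + 1) → Fin d) with hι
  set v : ι → MvPolynomial σ K := fun t => ∏ i, f i ^ (t i : ℕ) with hv
  -- total degree bound
  have hdeg : ∀ t : ι, (v t).totalDegree ≤ M := by
    intro t
    calc (v t).totalDegree ≤ ∑ i, (f i ^ (t i : ℕ)).totalDegree :=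
          totalDegree_finset_prod _ _
      _ ≤ ∑ _i : Fin (N + 1), d * D := by
          refine Finset.sum_le_sum fun i _ => ?_
          refine (totalDegree_pow _ _).trans ?_
          have h1 : (t i : ℕ) ≤ d := le_of_lt (t i).2
          have h2 : (f i).totalDegree ≤ D := by
            rw [hD]
            exact le_trans (Finset.le_sup (f := fun i => (f i).totalDegree)
              (Finset.mem_univ i)) (Nat.le_succ _)
          exact Nat.mul_le_mul h1 h2
      _ = M := by simp [hM, hc]; ring
  -- the finite set of monomials used
  set ℬ : Finset (σ →₀ ℕ) := Finset.image
    (fun h : σ → Fin (M + 1) => Finsupp.equivFunOnFinite.symm fun w => (h w : ℕ))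
    Finset.univ with hℬ
  set 𝒮 : Finset (MvPolynomial σ K) := ℬ.image (fun b => monomial b (1 : K)) with h𝒮
  have hcard𝒮 : 𝒮.card ≤ (M + 1) ^ N := by
    calc 𝒮.card ≤ ℬ.card := Finset.card_image_le
      _ ≤ Fintype.card (σ → Fin (M + 1)) := by
          refine le_trans Finset.card_image_le ?_; simp
      _ = (M + 1) ^ Fintype.card σ := by simp [Fintype.card_fun]
      _ ≤ (M + 1) ^ N := Nat.pow_le_pow_right (Nat.succ_le_succ (Nat.zero_le _)) hN
  -- membership in span
  have hmem : ∀ t : ι, v t ∈ Submodule.span K (𝒮 : Set (MvPolynomial σ K)) := by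
    intro t
    rw [(v t).as_sum]
    refine Submodule.sum_mem _ fun b hb => ?_
    have hb' : ∀ w : σ, b w ≤ M := by
      intro w
      have h1 : (b.sum fun _ n => n) ≤ M := le_trans (le_totalDegree hb) (hdeg t)
      by_cases hw : w ∈ b.support
      · calc b w ≤ b.sum fun _ n => n := Finset.single_le_sum (fun _ _ => Nat.zero_le _) hw
          _ ≤ M := h1
      · simp [Finsupp.notMem_support_iff.mp hw]
    have hbB : b ∈ ℬ := by
      rw [hℬ, Finset.mem_image]
      refine ⟨fun w => ⟨b w, Nat.lt_succ_of_le (hb' w)⟩, Finset.mem_univ _, ?_⟩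
      ext w
      simp [Finsupp.equivFunOnFinite]
    have : monomial b (coeff b (v t)) = coeff b (v t) • monomial b (1 : K) := by
      rw [smul_monomial, smul_eq_mul, mul_one]
    rw [this]
    exact Submodule.smul_mem _ _ (Submodule.subset_span (Finset.mem_coe.mpr
      (Finset.mem_image_of_mem _ hbB)))
  -- v is not linearly independent
  have hnli : ¬ LinearIndependent K v := by
    intro hli
    have hrange : Set.range v ≤ Submodule.span K (𝒮 : Set (MvPolynomial σ K)) := by
      rintro _ ⟨t, rfl⟩; exact hmem t
    have hle := linearIndependent_le_span' v hli (𝒮 : Set (MvPolynomial σ K)) hrange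
    rw [Cardinal.mk_fintype, Nat.cast_le] at hle
    have hfin : Fintype.card (𝒮 : Set (MvPolynomial σ K)) ≤ (M + 1) ^ N := by
      calc Fintype.card (𝒮 : Set (MvPolynomial σ K)) = 𝒮.card := by
            simp
        _ ≤ (M + 1) ^ N := hcard𝒮
    have hcard : Fintype.card ι = d ^ (N + 1) := by
      simp [hι, Fintype.card_fun]
    have hcontr : d ^ (N + 1) ≤ (M + 1) ^ N := by
      omega
    have hlt : (M + 1) ^ N < d ^ (N + 1) := by
      calc (M + 1) ^ N ≤ ((c + 1) * d) ^ N := by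
            refine Nat.pow_le_pow_left ?_ _
            simp only [hM]; nlinarith
        _ = (c + 1) ^ N * d ^ N := mul_pow _ _ _
        _ < d * d ^ N := by
            refine Nat.mul_lt_mul_of_lt_of_le ?_ le_rfl ?_
            · omega
            · positivity
        _ = d ^ (N + 1) := by ring
    omega
  rw [Fintype.not_linearIndependent_iff] at hnli
  obtain ⟨g, hg0, t₀, hgt₀⟩ := hnli
  set a : ι → (Fin (N + 1) →₀ ℕ) := fun t => Finsupp.equivFunOnFinite.symm fun i => (t i : ℕ)
    with ha
  have hainj : Function.Injective a := by
    intro t s hts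
    funext i
    have := congrArg (fun (x : Fin (N + 1) →₀ ℕ) => x i) hts
    simp only [ha, Finsupp.equivFunOnFinite] at this
    exact Fin.val_injective this
  refine ⟨∑ t : ι, monomial (a t) (g t), ?_, ?_⟩
  · intro h
    apply hgt₀
    have := congrArg (coeff (a t₀)) h
    rw [coeff_zero] at this
    rw [← this]
    rw [coeff_sum]
    rw [Finset.sum_eq_single t₀]
    · simp [coeff_monomial]
    · intro t _ hne
      rw [coeff_monomial, if_neg (fun h => hne (hainj h))]
    · simp
  · rw [map_sum]
    rw [← hg0]
    refine Finset.sum_congr rfl fun t _ => ?_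
    rw [aeval_monomial]
    rw [Algebra.smul_def]
    congr 1
    rw [Finsupp.prod_fintype]
    · refine Finset.prod_congr rfl fun i _ => ?_
      simp [ha, Finsupp.equivFunOnFinite]
    · intro i; exact pow_zero _

/-- Coquand–Lombardi style chain-killing lemma. -/
theorem aux_CL (K : Type) [Field K] : ∀ (m : ℕ) (A : Type) [CommRing A] [Algebra K A]
    (q : Fin (m + 1) → Ideal A) (hp : ∀ i, (q i).IsPrime)
    (hc : ∀ i : Fin m, q i.castSucc ≤ q i.succ)
    (f : Fin m → A) (hf1 : ∀ i, f i ∈ q i.succ) (hf0 : ∀ i, f i ∉ q i.castSucc)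
    (Q : MvPolynomial (Fin m) K), Q ≠ 0 → aeval f Q ∈ q 0 → False := by
  intro m
  induction m with
  | zero =>
    intro A _ _ q hp hc f hf1 hf0 Q hQ h0
    have hQC : Q = C (coeff 0 Q) := eq_C_of_isEmpty Q
    have hc0 : coeff 0 Q ≠ 0 := fun h => hQ (by rw [hQC, h, map_zero])
    have : aeval f Q = algebraMap K A (coeff 0 Q) := by conv_lhs => rw [hQC, aeval_C]
    rw [this] at h0
    have h1 : (1 : A) ∈ q 0 := by
      have := (q 0).mul_mem_left (algebraMap K A (coeff 0 Q)⁻¹) h0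
      rwa [← map_mul, inv_mul_cancel₀ hc0, map_one] at this
    exact (hp 0).ne_top ((Ideal.eq_top_iff_one _).mpr h1)
  | succ m IH =>
    intro A _ _ q hp hc f hf1 hf0 Q hQ h0
    set P : Polynomial (MvPolynomial (Fin m) K) := finSuccEquiv K m Q with hP
    have hPne : P ≠ 0 := fun h => hQ ((map_eq_zero_iff _ (AlgEquiv.injective _)).mp h)
    set t : ℕ := P.natTrailingDegree with ht
    obtain ⟨R, hR⟩ : (Polynomial.X : Polynomial (MvPolynomial (Fin m) K)) ^ t ∣ P :=
      Polynomial.X_pow_dvd_iff.mpr fun d hd =>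
        Polynomial.coeff_eq_zero_of_lt_natTrailingDegree hd
    set Q' : MvPolynomial (Fin m) K := R.coeff 0 with hQ'
    have hcoe := Polynomial.coeff_X_pow_mul R t 0
    rw [zero_add] at hcoe
    have hQ'eq : Q' = P.coeff t := by rw [hQ', ← hcoe, ← hR]
    have hQ'ne : Q' ≠ 0 := by
      rw [hQ'eq, ht]
      intro h
      exact hPne (Polynomial.trailingCoeff_eq_zero.mp h)
    -- the evaluation map
    set F : Polynomial (MvPolynomial (Fin m) K) →+* A :=
      Polynomial.eval₂RingHom
        ((aeval (fun i : Fin m => f i.succ) : MvPolynomial (Fin m) K →ₐ[K] A) :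
          MvPolynomial (Fin m) K →+* A) (f 0) with hF
    have hFX : F Polynomial.X = f 0 := by
      simp [hF, Polynomial.coe_eval₂RingHom]
    have hFC : ∀ y : MvPolynomial (Fin m) K,
        F (Polynomial.C y) = aeval (fun i : Fin m => f i.succ) y := by
      intro y; simp [hF, Polynomial.coe_eval₂RingHom]
    have key : ∀ S : MvPolynomial (Fin (m + 1)) K, F (finSuccEquiv K m S) = aeval f S := by
      intro S
      have : (F.comp ((finSuccEquiv K m : MvPolynomial (Fin (m + 1)) K ≃ₐ[K] _) :
          MvPolynomial (Fin (m + 1)) K →ₐ[K] _).toRingHom) =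
          ((aeval f : MvPolynomial (Fin (m + 1)) K →ₐ[K] A) : _ →+* A) := by
        apply MvPolynomial.ringHom_ext
        · intro c
          have h1 : (finSuccEquiv K m) (C c : MvPolynomial (Fin (m + 1)) K) =
              Polynomial.C (C c) := by
            simp [finSuccEquiv_apply]
          simp [h1, hFC, algebraMap_eq]
        · intro i
          refine Fin.cases ?_ (fun j => ?_) i
          · simp [finSuccEquiv_X_zero, hFX]
          · simp [finSuccEquiv_X_succ, hFC]
      exact congrFun (congrArg (fun (g : MvPolynomial (Fin (m + 1)) K →+* A) => ⇑g) this) S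
    have h0' : (f 0) ^ t * F R ∈ q 0 := by
      have hk : f 0 ^ t * F R = aeval f Q := by
        rw [← key Q, ← hP, hR, map_mul, map_pow, hFX]
      rw [hk]; exact h0
    have hf00 : f 0 ∉ q 0 := by
      have := hf0 0
      rwa [Fin.castSucc_zero] at this
    have hFR : F R ∈ q 0 := by
      rcases (hp 0).mem_or_mem h0' with h | h
      · exact absurd ((hp 0).mem_of_pow_mem _ h) hf00
      · exact h
    have hq01 : q 0 ≤ q 1 := by
      have := hc 0
      rwa [Fin.castSucc_zero, Fin.succ_zero_eq_one] at this
    have hf01 : f 0 ∈ q 1 := by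
      have := hf1 0
      rwa [Fin.succ_zero_eq_one] at this
    -- decompose R
    have hRdec : F R = f 0 * F R.divX + aeval (fun i : Fin m => f i.succ) Q' := by
      conv_lhs => rw [← Polynomial.X_mul_divX_add R]
      rw [map_add, map_mul, hFX, hFC, hQ']
    have hQ'mem : aeval (fun i : Fin m => f i.succ) Q' ∈ q 1 := by
      have h1 : F R ∈ q 1 := hq01 hFR
      have h2 : f 0 * F R.divX ∈ q 1 := (q 1).mul_mem_right _ hf01
      have := (q 1).sub_mem h1 h2
      rwa [hRdec, add_sub_cancel_left] at this
    exact IH A (fun i => q i.succ) (fun i => hp i.succ)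
      (fun i => by
        have := hc i.succ
        rwa [← Fin.succ_castSucc] at this)
      (fun i => f i.succ) (fun i => hf1 i.succ)
      (fun i => by
        have := hf0 i.succ
        rwa [← Fin.succ_castSucc] at this)
      Q' hQ'ne (by simpa [Fin.succ_zero_eq_one] using hQ'mem)

/-- Every chain of primes in a polynomial ring over a field in finitely many
variables has length at most the number of variables. -/
theorem aux_dim_le (K : Type) [Field K] (σ : Type) [Fintype σ]
    (p : LTSeries (PrimeSpectrum (MvPolynomial σ K))) : p.length ≤ Fintype.card σ := by
  classical
  by_contra hlen
  push_neg at hlen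
  set N := Fintype.card σ with hN
  have hle : N + 2 ≤ p.length + 1 := by omega
  set q : Fin (N + 2) → Ideal (MvPolynomial σ K) :=
    fun i => (p.toFun (Fin.castLE hle i)).asIdeal with hq
  have hqmono : StrictMono q := by
    intro i j hij
    exact p.strictMono (by simpa using hij)
  have hstep : ∀ i : Fin (N + 1), q i.castSucc < q i.succ :=
    fun i => hqmono Fin.castSucc_lt_succ
  have hex : ∀ i : Fin (N + 1), ∃ x, x ∈ q i.succ ∧ x ∉ q i.castSucc := by
    intro i
    obtain ⟨x, hx1, hx2⟩ := SetLike.exists_of_lt (hstep i)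
    exact ⟨x, hx1, hx2⟩
  choose f hf1 hf0 using hex
  obtain ⟨Q, hQne, hQ0⟩ := aux_algdep K σ N le_rfl f
  exact aux_CL K (N + 1) (MvPolynomial σ K) q (fun i => (p.toFun _).isPrime)
    (fun i => le_of_lt (hstep i)) f hf1 hf0 Q hQne (by rw [hQ0]; exact zero_mem _)

section SpanX

variable (K : Type) [Field K] {σ : Type}

/-- The substitution that kills the variables in `s`. -/
def killHom (s : Set σ) : MvPolynomial σ K →ₐ[K] MvPolynomial σ K :=
  aeval (fun v => if v ∈ s then 0 else X v)

/-- The ideal generated by the variables in `s`. -/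
def spanX (s : Set σ) : Ideal (MvPolynomial σ K) :=
  Ideal.span ((fun v => (X v : MvPolynomial σ K)) '' s)

theorem spanX_le_iff {s : Set σ} {I : Ideal (MvPolynomial σ K)} :
    spanX K s ≤ I ↔ ∀ v ∈ s, (X v : MvPolynomial σ K) ∈ I := by
  rw [spanX, Ideal.span_le]
  constructor
  · intro h v hv; exact h ⟨v, hv, rfl⟩
  · rintro h _ ⟨v, hv, rfl⟩; exact h v hv

theorem killHom_monomial_avoid {s : Set σ} {a : σ →₀ ℕ} (h : ∀ v ∈ s, a v = 0) (c : K) :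
    killHom K s (monomial a c) = monomial a c := by
  rw [killHom, aeval_monomial]
  have he : (a.prod fun v k => (if v ∈ s then 0 else (X v : MvPolynomial σ K)) ^ k)
      = a.prod fun v k => (X v : MvPolynomial σ K) ^ k := by
    apply Finsupp.prod_congr
    intro v hv
    rw [if_neg fun hvs => (Finsupp.mem_support_iff.mp hv) (h v hvs)]
  rw [he, monomial_eq, algebraMap_eq]

theorem killHom_monomial_touch {s : Set σ} {a : σ →₀ ℕ} (h : ∃ v ∈ s, a v ≠ 0) (c : K) :
    killHom K s (monomial a c) = 0 := by
  obtain ⟨v₀, hv₀s, hv₀⟩ := h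
  rw [killHom, aeval_monomial, Finsupp.prod,
    Finset.prod_eq_zero (Finsupp.mem_support_iff.mpr hv₀), mul_zero]
  rw [if_pos hv₀s, zero_pow hv₀]

theorem spanX_eq_ker (s : Set σ) :
    spanX K s = RingHom.ker (killHom K s).toRingHom := by
  apply le_antisymm
  · rw [spanX, Ideal.span_le]
    rintro _ ⟨v, hv, rfl⟩
    have : killHom K s (X v) = 0 := by rw [killHom, aeval_X, if_pos hv]
    simpa [RingHom.mem_ker] using this
  · intro p hp
    rw [RingHom.mem_ker] at hp
    have hp' : killHom K s p = 0 := hp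
    rw [spanX]
    have himg : ((fun v => (X v : MvPolynomial σ K)) '' s) = (X '' s) := rfl
    rw [himg, mem_ideal_span_X_image]
    intro mm hm
    by_contra hcon
    push_neg at hcon
    have hcon' : ∀ v ∈ s, mm v = 0 := hcon
    have hco : coeff mm ((killHom K s) p) = coeff mm p := by
      conv_lhs => rw [p.as_sum, map_sum]
      rw [coeff_sum]
      rw [Finset.sum_eq_single mm]
      · rw [killHom_monomial_avoid K hcon', coeff_monomial, if_pos rfl]
      · intro b _ hbm
        by_cases htouch : ∃ v ∈ s, b v ≠ 0
        · rw [killHom_monomial_touch K htouch, coeff_zero]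
        · push_neg at htouch
          rw [killHom_monomial_avoid K htouch, coeff_monomial, if_neg hbm]
      · intro hmem; exact absurd hm hmem
    rw [hp', coeff_zero] at hco
    exact (Finsupp.mem_support_iff.mp hm) hco.symm

theorem spanX_isPrime (s : Set σ) : (spanX K s).IsPrime := by
  rw [spanX_eq_ker]
  exact RingHom.ker_isPrime _

theorem X_mem_spanX (s : Set σ) (v : σ) :
    (X v : MvPolynomial σ K) ∈ spanX K s ↔ v ∈ s := by
  constructor
  · intro h
    by_contra hv
    rw [spanX_eq_ker, RingHom.mem_ker] at h
    have : killHom K s (X v) = 0 := h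
    rw [killHom, aeval_X, if_neg hv] at this
    exact X_ne_zero v this
  · intro hv
    exact Ideal.subset_span ⟨v, hv, rfl⟩

theorem prod_X_mem_spanX {ι : Type} (T : Finset ι) (g : ι → σ) (s : Set σ) :
    (∏ i ∈ T, (X (g i) : MvPolynomial σ K)) ∈ spanX K s ↔ ∃ i ∈ T, g i ∈ s := by
  haveI := spanX_isPrime K s
  rw [Ideal.IsPrime.prod_mem_iff]
  constructor
  · rintro ⟨i, hi, hXi⟩; exact ⟨i, hi, (X_mem_spanX K s _).mp hXi⟩
  · rintro ⟨i, hi, hgi⟩; exact ⟨i, hi, (X_mem_spanX K s _).mpr hgi⟩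

theorem spanX_mono {s t : Set σ} (h : s ⊆ t) : spanX K s ≤ spanX K t :=
  Ideal.span_mono (Set.image_mono h)

theorem spanX_strict {s t : Set σ} (h : s ⊆ t) {v : σ} (hvt : v ∈ t) (hvs : v ∉ s) :
    spanX K s < spanX K t := by
  refine lt_of_le_of_ne (spanX_mono K h) ?_
  intro he
  have := (X_mem_spanX K t v).mpr hvt
  rw [← he] at this
  exact hvs ((X_mem_spanX K s v).mp this)

/-- The sets occurring in a chain of variable ideals. -/
def chainSets {k : ℕ} (g : Fin k → σ) (s : Set σ) (j : Fin (k + 1)) : Set σ :=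
  s ∪ g '' {i | (i : ℕ) < (j : ℕ)}

theorem chainSets_zero {k : ℕ} (g : Fin k → σ) (s : Set σ) : chainSets g s 0 = s := by
  have : {i : Fin k | (i : ℕ) < ((0 : Fin (k + 1)) : ℕ)} = ∅ := by
    ext i; simp
  rw [chainSets, this]
  simp

theorem chain_strictMono {k : ℕ} (g : Fin k → σ) (hg : Function.Injective g) (s : Set σ)
    (hgs : ∀ i, g i ∉ s) :
    StrictMono (fun j => (⟨spanX K (chainSets g s j), spanX_isPrime K _⟩ :
      PrimeSpectrum (MvPolynomial σ K))) := by
  rw [Fin.strictMono_iff_lt_succ]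
  intro i
  rw [← PrimeSpectrum.asIdeal_lt_asIdeal]
  refine spanX_strict K ?_ (v := g i) ?_ ?_
  · refine Set.union_subset_union_right _ (Set.image_mono ?_)
    intro i' hi'
    simp only [Set.mem_setOf_eq, Fin.coe_castSucc] at hi'
    simp only [Set.mem_setOf_eq, Fin.val_succ]
    omega
  · refine Set.mem_union_right _ ⟨i, ?_, rfl⟩
    simp only [Set.mem_setOf_eq, Fin.val_succ]
    omega
  · rintro (h | ⟨i', hi', heq⟩)
    · exact hgs i h
    · have : i' = i := hg heq
      subst this
      simp only [Set.mem_setOf_eq, Fin.coe_castSucc] at hi'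
      omega

end SpanX

section LPQfacts

variable (K : Type) [Field K] (P Q : Type) [PartialOrder P] [PartialOrder Q]
  [Fintype P] [Fintype Q] [Nonempty P] [Nonempty Q]

/-- The graph of a map `Q → P` inside `P × Q`. -/
def sGraph (f : Q → P) : Set (P × Q) := Set.range fun q => ((f q, q) : P × Q)

theorem exists_cover (𝔭 : Ideal (MvPolynomial (P × Q) K)) (hpr : 𝔭.IsPrime)
    (hL : LPQ K P Q ≤ 𝔭) (q : Q) : ∃ p : P, (X ((p, q) : P × Q) : MvPolynomial (P × Q) K) ∈ 𝔭 := by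
  have hu : (∏ p : P, (X ((p, q) : P × Q) : MvPolynomial (P × Q) K)) ∈ LPQ K P Q :=
    Ideal.subset_span ⟨⟨fun _ => q, monotone_const⟩, rfl⟩
  have hmem := hL hu
  haveI := hpr
  obtain ⟨p, _, hp⟩ := Ideal.IsPrime.prod_mem_iff.mp hmem
  exact ⟨p, hp⟩

theorem L_le_spanX_iff (f : Q → P) :
    LPQ K P Q ≤ spanX K (sGraph P Q f) ↔ ∀ φ : P →o Q, ∃ p : P, f (φ p) = p := by
  rw [LPQ, Ideal.span_le]
  constructor
  · intro h φ
    have hm : (∏ p : P, (X ((p, φ p) : P × Q) : MvPolynomial (P × Q) K)) ∈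
        spanX K (sGraph P Q f) := h ⟨φ, rfl⟩
    rw [prod_X_mem_spanX] at hm
    obtain ⟨p, _, hp⟩ := hm
    obtain ⟨q', hq'⟩ := hp
    have h1 : f q' = p := congrArg Prod.fst hq'
    have h2 : q' = φ p := congrArg Prod.snd hq'
    exact ⟨p, by rw [← h2, h1]⟩
  · rintro h _ ⟨φ, rfl⟩
    obtain ⟨p, hp⟩ := h φ
    rw [SetLike.mem_coe, prod_X_mem_spanX]
    exact ⟨p, Finset.mem_univ _, ⟨φ p, by simp [hp]⟩⟩

theorem min_of_graph (f : Q → P) (hL : LPQ K P Q ≤ spanX K (sGraph P Q f)) :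
    spanX K (sGraph P Q f) ∈ (LPQ K P Q).minimalPrimes := by
  refine ⟨⟨spanX_isPrime K _, hL⟩, ?_⟩
  rintro J ⟨hJpr, hLJ⟩ hle
  rw [spanX, Ideal.span_le]
  rintro _ ⟨_, ⟨q, rfl⟩, rfl⟩
  obtain ⟨p, hp⟩ := exists_cover K P Q J hJpr hLJ q
  have hpmem : ((p, q) : P × Q) ∈ sGraph P Q f :=
    (X_mem_spanX K _ _).mp (hle hp)
  obtain ⟨q', hq'⟩ := hpmem
  have h2 : q' = q := congrArg Prod.snd hq'
  have h1 : f q = p := by rw [← h2]; exact congrArg Prod.fst hq'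
  show (X ((f q, q) : P × Q) : MvPolynomial (P × Q) K) ∈ J
  rw [h1]
  exact hp

/-- A chain of length `card Q` ending at any prime containing `L(P,Q)`. -/
theorem low_series (𝔭 : PrimeSpectrum (MvPolynomial (P × Q) K))
    (hL : LPQ K P Q ≤ 𝔭.asIdeal) :
    ∃ c : LTSeries (PrimeSpectrum (MvPolynomial (P × Q) K)),
      c.last = 𝔭 ∧ c.length = Fintype.card Q := by
  classical
  have hcov := fun q => exists_cover K P Q 𝔭.asIdeal 𝔭.isPrime hL q
  choose pf hpf using hcov
  set m := Fintype.card Q with hm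
  set e : Fin m ≃ Q := (Fintype.equivFin Q).symm with he
  set g : Fin m → P × Q := fun i => (pf (e i), e i) with hgdef
  have hg : Function.Injective g := by
    intro i j h
    exact e.injective (congrArg Prod.snd h)
  set tf : Fin (m + 1) → PrimeSpectrum (MvPolynomial (P × Q) K) :=
    fun j => if h : (j : ℕ) = m then 𝔭
      else ⟨spanX K (g '' {i | (i : ℕ) < (j : ℕ)}), spanX_isPrime K _⟩ with htf
  have hmono : StrictMono tf := by
    rw [Fin.strictMono_iff_lt_succ]
    intro i
    have hilt : (i : ℕ) < m := i.isLt
    have hne : (i : ℕ) ≠ m := Nat.ne_of_lt hilt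
    have h1 : tf i.castSucc = ⟨spanX K (g '' {i' | (i' : ℕ) < (i : ℕ)}), spanX_isPrime K _⟩ := by
      rw [htf]
      simp only [Fin.coe_castSucc]
      rw [dif_neg hne]
    by_cases h : ((i.succ : Fin (m + 1)) : ℕ) = m
    · have h2 : tf i.succ = 𝔭 := by rw [htf]; simp only; rw [dif_pos h]
      rw [h1, h2, ← PrimeSpectrum.asIdeal_lt_asIdeal]
      refine lt_of_le_of_ne ?_ ?_
      · show spanX K _ ≤ 𝔭.asIdeal
        rw [spanX_le_iff]
        rintro _ ⟨i', _, rfl⟩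
        exact hpf (e i')
      · intro heq
        have hXi : (X (g i) : MvPolynomial (P × Q) K) ∈ 𝔭.asIdeal := hpf (e i)
        have heq' : spanX K (g '' {i' | (i' : ℕ) < (i : ℕ)}) = 𝔭.asIdeal := heq
        rw [← heq'] at hXi
        obtain ⟨i', hi', hgi⟩ := (X_mem_spanX K _ _).mp hXi
        have : i' = i := hg hgi
        subst this
        simp only [Set.mem_setOf_eq] at hi'
        omega
    · have h2 : tf i.succ =
          ⟨spanX K (g '' {i' | (i' : ℕ) < ((i : ℕ) + 1)}), spanX_isPrime K _⟩ := by
        rw [htf]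
        simp only [Fin.val_succ]
        rw [dif_neg (by simpa using h)]
      rw [h1, h2, ← PrimeSpectrum.asIdeal_lt_asIdeal]
      show spanX K _ < spanX K _
      refine spanX_strict K ?_ (v := g i) ?_ ?_
      · refine Set.image_mono ?_
        intro i' hi'
        simp only [Set.mem_setOf_eq] at hi' ⊢
        omega
      · exact ⟨i, Nat.lt_succ_self _, rfl⟩
      · rintro ⟨i', hi', heq⟩
        have : i' = i := hg heq
        subst this
        simp only [Set.mem_setOf_eq] at hi'
        omega
  refine ⟨LTSeries.mk m tf hmono, ?_, rfl⟩
  show tf (Fin.last m) = 𝔭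
  rw [htf]
  exact dif_pos rfl

theorem height_ge (𝔭 : PrimeSpectrum (MvPolynomial (P × Q) K))
    (hL : LPQ K P Q ≤ 𝔭.asIdeal) :
    (Fintype.card Q : ℕ∞) ≤ Order.height 𝔭 := by
  obtain ⟨c, hlast, hlen⟩ := low_series K P Q 𝔭 hL
  have := Order.length_le_height_last (p := c)
  rw [hlast, hlen] at this
  exact_mod_cast this

end LPQfacts

section Upper

variable (K : Type) [Field K] (P Q : Type) [PartialOrder P] [PartialOrder Q]
  [Fintype P] [Fintype Q] [Nonempty P] [Nonempty Q]

theorem up_series (p₀ : P) :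
    ∃ c : LTSeries (PrimeSpectrum (MvPolynomial (P × Q) K)),
      c.head = ⟨spanX K (sGraph P Q fun _ => p₀), spanX_isPrime K _⟩ ∧
      c.length = (Fintype.card P - 1) * Fintype.card Q ∧
      ∀ j, spanX K (sGraph P Q fun _ => p₀) ≤ (c.toFun j).asIdeal := by
  classical
  set s : Set (P × Q) := sGraph P Q fun _ => p₀ with hs
  set k' : ℕ := Fintype.card P - 1 with hk'
  set m : ℕ := Fintype.card Q with hm
  have hcard : Fintype.card {p : P // p ≠ p₀} = k' := by
    have h1 : Fintype.card {p : P // ¬ p = p₀} =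
        Fintype.card P - Fintype.card {p : P // p = p₀} := Fintype.card_subtype_compl _
    rw [Fintype.card_subtype_eq] at h1
    exact h1
  set e1 : Fin k' ≃ {p : P // p ≠ p₀} := (Fintype.equivFinOfCardEq hcard).symm with he1
  set e2 : Fin m ≃ Q := (Fintype.equivFin Q).symm with he2
  set g : Fin (k' * m) → P × Q := fun i =>
    ((e1 (finProdFinEquiv.symm i).1).1, e2 (finProdFinEquiv.symm i).2) with hg
  have hginj : Function.Injective g := by
    intro i j hij
    have h1 : (e1 (finProdFinEquiv.symm i).1).1 = (e1 (finProdFinEquiv.symm j).1).1 :=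
      congrArg Prod.fst hij
    have h2 : e2 (finProdFinEquiv.symm i).2 = e2 (finProdFinEquiv.symm j).2 :=
      congrArg Prod.snd hij
    have h1' : (finProdFinEquiv.symm i).1 = (finProdFinEquiv.symm j).1 :=
      e1.injective (Subtype.ext h1)
    have h2' : (finProdFinEquiv.symm i).2 = (finProdFinEquiv.symm j).2 := e2.injective h2
    have h3 : finProdFinEquiv.symm i = finProdFinEquiv.symm j := Prod.ext h1' h2'
    exact finProdFinEquiv.symm.injective h3
  have hgs : ∀ i, g i ∉ s := by
    rintro i ⟨q, hq⟩
    exact (e1 (finProdFinEquiv.symm i).1).2 (congrArg Prod.fst hq).symm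
  refine ⟨LTSeries.mk (k' * m)
    (fun j => ⟨spanX K (chainSets g s j), spanX_isPrime K _⟩)
    (chain_strictMono K g hginj s hgs), ?_, rfl, ?_⟩
  · show (⟨spanX K (chainSets g s 0), _⟩ : PrimeSpectrum _) = _
    exact PrimeSpectrum.ext (congrArg (spanX K) (chainSets_zero g s))
  · intro j
    exact spanX_mono K Set.subset_union_left

theorem height_p0_le (p₀ : P) :
    Order.height (⟨spanX K (sGraph P Q fun _ => p₀), spanX_isPrime K _⟩ :
      PrimeSpectrum (MvPolynomial (P × Q) K)) ≤ (Fintype.card Q : ℕ∞) := by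
  obtain ⟨c, hhead, hlen, -⟩ := up_series K P Q p₀
  apply Order.height_le
  intro pσ hlast
  have hconn : pσ.last = c.head := by rw [hlast, hhead]
  have htot := aux_dim_le K (P × Q) (pσ.smash c hconn)
  rw [RelSeries.smash_length, hlen, Fintype.card_prod] at htot
  obtain ⟨P', hP'⟩ : ∃ P', Fintype.card P = P' + 1 :=
    ⟨Fintype.card P - 1, (Nat.succ_pred_eq_of_pos Fintype.card_pos).symm⟩
  rw [hP'] at htot
  simp only [Nat.add_sub_cancel, Nat.succ_mul] at htot
  have harr : pσ.length ≤ Fintype.card Q := by omega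
  exact_mod_cast harr

theorem krull_ge :
    (((Fintype.card P - 1) * Fintype.card Q : ℕ) : WithBot ℕ∞) ≤
      ringKrullDim (MvPolynomial (P × Q) K ⧸ LPQ K P Q) := by
  classical
  have p₀ : P := Classical.arbitrary P
  have hL₀ : LPQ K P Q ≤ spanX K (sGraph P Q fun _ => p₀) :=
    (L_le_spanX_iff K P Q _).mpr fun φ => ⟨p₀, rfl⟩
  obtain ⟨c, hhead, hlen, hcont⟩ := up_series K P Q p₀
  set mk := Ideal.Quotient.mk (LPQ K P Q) with hmk
  have hsurj : Function.Surjective mk := Ideal.Quotient.mk_surjective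
  have hker : RingHom.ker mk = LPQ K P Q := Ideal.mk_ker
  have hLj : ∀ j, LPQ K P Q ≤ (c.toFun j).asIdeal := fun j => hL₀.trans (hcont j)
  have hprime : ∀ j, (Ideal.map mk (c.toFun j).asIdeal).IsPrime := fun j =>
    haveI := (c.toFun j).isPrime
    Ideal.map_isPrime_of_surjective hsurj (by rw [hker]; exact hLj j)
  set d : LTSeries (PrimeSpectrum (MvPolynomial (P × Q) K ⧸ LPQ K P Q)) :=
    LTSeries.mk c.length (fun j => ⟨Ideal.map mk (c.toFun j).asIdeal, hprime j⟩)
      (by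
        intro a b hab
        have hlt : c.toFun a < c.toFun b := c.strictMono hab
        rw [← PrimeSpectrum.asIdeal_lt_asIdeal] at hlt ⊢
        refine lt_of_le_of_ne (Ideal.map_mono hlt.le) ?_
        intro heq
        have hcc := congrArg (Ideal.comap mk) heq
        rw [Ideal.comap_map_of_surjective mk hsurj,
          Ideal.comap_map_of_surjective mk hsurj] at hcc
        rw [← RingHom.ker_eq_comap_bot, hker] at hcc
        rw [sup_eq_left.mpr (hLj a), sup_eq_left.mpr (hLj b)] at hcc
        exact hlt.ne hcc) with hd
  have hlen' : d.length = (Fintype.card P - 1) * Fintype.card Q := hlen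
  calc (((Fintype.card P - 1) * Fintype.card Q : ℕ) : WithBot ℕ∞)
      = (d.length : WithBot ℕ∞) := by rw [hlen']
    _ ≤ _ := Order.LTSeries.length_le_krullDim d

theorem krull_le :
    ringKrullDim (MvPolynomial (P × Q) K ⧸ LPQ K P Q) ≤
      (((Fintype.card P - 1) * Fintype.card Q : ℕ) : WithBot ℕ∞) := by
  classical
  set mk := Ideal.Quotient.mk (LPQ K P Q) with hmk
  have hsurj : Function.Surjective mk := Ideal.Quotient.mk_surjective
  have p₀ : P := Classical.arbitrary P
  have hL₀ : LPQ K P Q ≤ spanX K (sGraph P Q fun _ => p₀) :=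
    (L_le_spanX_iff K P Q _).mpr fun φ => ⟨p₀, rfl⟩
  haveI hne : Nonempty (PrimeSpectrum (MvPolynomial (P × Q) K ⧸ LPQ K P Q)) := by
    haveI := spanX_isPrime K (sGraph P Q fun _ => p₀)
    exact ⟨⟨Ideal.map mk (spanX K (sGraph P Q fun _ => p₀)),
      Ideal.map_isPrime_of_surjective hsurj (by rw [Ideal.mk_ker]; exact hL₀)⟩⟩
  show Order.krullDim (PrimeSpectrum (MvPolynomial (P × Q) K ⧸ LPQ K P Q)) ≤
    (((Fintype.card P - 1) * Fintype.card Q : ℕ) : WithBot ℕ∞)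
  rw [Order.krullDim_eq_iSup_length]
  have hbound : (⨆ (pq : LTSeries (PrimeSpectrum (MvPolynomial (P × Q) K ⧸ LPQ K P Q))),
      (pq.length : ℕ∞)) ≤ (((Fintype.card P - 1) * Fintype.card Q : ℕ) : ℕ∞) := by
    refine iSup_le fun pq => ?_
    have hF : StrictMono (fun x : PrimeSpectrum (MvPolynomial (P × Q) K ⧸ LPQ K P Q) =>
        PrimeSpectrum.comap mk x) := by
      intro a b hab
      rw [← PrimeSpectrum.asIdeal_lt_asIdeal]
      simp only [PrimeSpectrum.comap_asIdeal]
      refine lt_of_le_of_ne (Ideal.comap_mono hab.le) ?_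
      intro heq
      have hmm := congrArg (Ideal.map mk) heq
      rw [Ideal.map_comap_of_surjective mk hsurj, Ideal.map_comap_of_surjective mk hsurj] at hmm
      exact hab.ne (PrimeSpectrum.ext hmm)
    set r := LTSeries.map pq (fun x => PrimeSpectrum.comap mk x) hF with hr
    have hrL : LPQ K P Q ≤ r.head.asIdeal := by
      show LPQ K P Q ≤ (PrimeSpectrum.comap mk pq.head).asIdeal
      simp only [PrimeSpectrum.comap_asIdeal]
      calc LPQ K P Q = RingHom.ker mk := Ideal.mk_ker.symm
        _ ≤ _ := Ideal.ker_le_comap mk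
    obtain ⟨c, hlast, hlen⟩ := low_series K P Q r.head hrL
    have htot := aux_dim_le K (P × Q) (c.smash r hlast)
    rw [RelSeries.smash_length, hlen, Fintype.card_prod] at htot
    have hrlen : r.length = pq.length := rfl
    rw [hrlen] at htot
    obtain ⟨P', hP'⟩ : ∃ P', Fintype.card P = P' + 1 :=
      ⟨Fintype.card P - 1, (Nat.succ_pred_eq_of_pos Fintype.card_pos).symm⟩
    have harr : pq.length ≤ (Fintype.card P - 1) * Fintype.card Q := by
      rw [hP'] at htot ⊢
      rw [Nat.succ_mul] at htot
      simp only [Nat.add_sub_cancel]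
      omega
    exact_mod_cast harr
  exact le_trans (WithBot.coe_le_coe.mpr hbound) (le_of_eq (by norm_cast))

end Upper


end AuxStmt4

/-- Heights of the minimal primes of `L(P,Q)`, its height, and the
Krull dimension of `K[P,Q]`. -/
theorem stmt_4 (K : Type) [Field K] (P Q : Type) [PartialOrder P] [PartialOrder Q]
    [Fintype P] [Fintype Q] [Nonempty P] [Nonempty Q] :
    (∀ 𝔭 ∈ (LPQ K P Q).minimalPrimes, (Fintype.card Q : ℕ∞) ≤ idealHeight 𝔭) ∧
    (∃ 𝔭 ∈ (LPQ K P Q).minimalPrimes, idealHeight 𝔭 = (Fintype.card Q : ℕ∞)) ∧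
    (∀ ψ : Q →o P,
      (Ideal.span (Set.range fun q : Q => (X (ψ q, q) : MvPolynomial (P × Q) K))
          ∈ (LPQ K P Q).minimalPrimes ↔
        ∀ φ : P →o Q, ∃ p : P, ψ (φ p) = p)) ∧
    idealHeight (LPQ K P Q) = (Fintype.card Q : ℕ∞) ∧
    ringKrullDim (MvPolynomial (P × Q) K ⧸ LPQ K P Q) =
      ((Fintype.card Q * (Fintype.card P - 1) : ℕ) : WithBot ℕ∞) := by
  classical
  have p₀ : P := Classical.arbitrary P
  have hL₀ : LPQ K P Q ≤ spanX K (sGraph P Q fun _ => p₀) :=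
    (L_le_spanX_iff K P Q _).mpr fun φ => ⟨p₀, rfl⟩
  set pt₀ : PrimeSpectrum (MvPolynomial (P × Q) K) :=
    ⟨spanX K (sGraph P Q fun _ => p₀), spanX_isPrime K _⟩ with hpt₀
  refine ⟨?_, ?_, ?_, ?_, ?_⟩
  · -- (1) every minimal prime has height at least card Q
    intro 𝔭 h𝔭
    rw [idealHeight]
    refine le_sInf ?_
    rintro h ⟨pp, hle, rfl⟩
    exact height_ge K P Q pp (le_trans h𝔭.1.2 hle)
  · -- (2) existence of a minimal prime of height exactly card Q
    refine ⟨spanX K (sGraph P Q fun _ => p₀), min_of_graph K P Q _ hL₀, ?_⟩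
    rw [idealHeight]
    apply le_antisymm
    · exact le_trans (sInf_le ⟨pt₀, le_rfl, rfl⟩) (height_p0_le K P Q p₀)
    · refine le_sInf ?_
      rintro h ⟨pp, hle, rfl⟩
      exact height_ge K P Q pp (le_trans hL₀ hle)
  · -- (3) the characterization of the minimal primes of the form 𝔭_ψ
    intro ψ
    have hspan : Ideal.span (Set.range fun q : Q => (X (ψ q, q) : MvPolynomial (P × Q) K))
        = spanX K (sGraph P Q fun q => ψ q) := by
      rw [spanX, sGraph, ← Set.range_comp]
      rfl
    rw [hspan]
    constructor
    · intro h φ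
      exact ((L_le_spanX_iff K P Q _).mp h.1.2) φ
    · intro h
      exact min_of_graph K P Q _ ((L_le_spanX_iff K P Q _).mpr h)
  · -- (4) the height of L(P,Q)
    rw [idealHeight]
    apply le_antisymm
    · exact le_trans (sInf_le ⟨pt₀, hL₀, rfl⟩) (height_p0_le K P Q p₀)
    · refine le_sInf ?_
      rintro h ⟨pp, hle, rfl⟩
      exact height_ge K P Q pp hle
  · -- (5) the Krull dimension of K[P,Q]
    have hmc : Fintype.card Q * (Fintype.card P - 1)
        = (Fintype.card P - 1) * Fintype.card Q := Nat.mul_comm _ _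
    rw [hmc]
    exact le_antisymm (krull_le K P Q) (krull_ge K P Q)
end

section
/- Let P and Q be finite posets and let P' ⊆ P be a subposet such that every order-preserving map φ : P' → Q extends to an order-preserving map P → Q. Then β_i^{S_{P,Q}}(K[P,Q]) ≥ β_i^{S_{P',Q}}(K[P',Q]) for all i. -/
open MvPolynomial

set_option maxHeartbeats 1000000
set_option synthInstance.maxHeartbeats 1000000

noncomputable section

attribute [local instance] Classical.propDecidable

end

/-! ### Auxiliary development for Statement 7 -/

noncomputable section Stmt7Aux
open MvPolynomial
attribute [local instance] Classical.propDecidable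

/-- monomial ideal spanned by exponents in `M`. -/
def Ispan (K : Type) [Field K] {σ : Type} (M : Set (σ →₀ ℕ)) : Ideal (MvPolynomial σ K) :=
  Ideal.span ((fun a => monomial a (1 : K)) '' M)

/-- span of `X w - 1`, `w ∈ W`. -/
def Jspan (K : Type) [Field K] {σ : Type} (W : Set σ) : Ideal (MvPolynomial σ K) :=
  Ideal.span ((fun v => (X v : MvPolynomial σ K) - 1) '' W)

section MonReg
variable {σ K : Type} [Field K]

/-- `X v - 1` is a nonzerodivisor modulo a monomial ideal. -/
lemma regular_X_sub_one_mod_monomial (M : Set (σ →₀ ℕ)) (v : σ) (f : MvPolynomial σ K)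
    (h : (X v - 1) * f ∈ Ispan K M) : f ∈ Ispan K M := by
  classical
  rw [Ispan, mem_ideal_span_monomial_image] at h ⊢
  have key : ∀ n (m : σ →₀ ℕ), (m.sum fun _ k => k) = n →
      (∀ a ∈ M, ¬ a ≤ m) → coeff m f = 0 := by
    intro n
    induction n using Nat.strong_induction_on with
    | _ n ih =>
      intro m hm hnot
      have hns : m ∉ ((X v - 1) * f).support := by
        intro hmem
        obtain ⟨a, ha, hle⟩ := h m hmem
        exact hnot a ha hle
      rw [MvPolynomial.notMem_support_iff] at hns
      have hrw : (X v - 1) * f = f * X v - f := by ring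
      rw [hrw, coeff_sub, coeff_mul_X'] at hns
      by_cases hv : v ∈ m.support
      · have hco : coeff m f = coeff (m - Finsupp.single v 1) f := by
          rw [if_pos hv] at hns
          exact (sub_eq_zero.mp hns).symm
        set m' := m - Finsupp.single v 1 with hm'
        have hmv : 1 ≤ m v := by
          rwa [Finsupp.mem_support_iff, ← Nat.one_le_iff_ne_zero] at hv
        have hsum : m' + Finsupp.single v 1 = m := by
          ext a
          by_cases hav : a = v
          · subst hav
            simp [hm', Nat.sub_add_cancel hmv]
          · have hne : ¬ v = a := fun h => hav h.symm
            simp [hm', Finsupp.single_apply, hne]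
        have hlt : (m'.sum fun _ k => k) < n := by
          have : (m.sum fun _ k => k) = (m'.sum fun _ k => k) + 1 := by
            rw [← hsum, Finsupp.sum_add_index' (fun _ => rfl) (fun _ _ _ => rfl),
              Finsupp.sum_single_index rfl]
          omega
        have hnot' : ∀ a ∈ M, ¬ a ≤ m' := by
          intro a ha hle
          exact hnot a ha (hle.trans (by rw [hm']; exact tsub_le_self))
        rw [hco]
        exact ih _ hlt m' rfl hnot'
      · rw [if_neg hv] at hns
        have : -coeff m f = 0 := by rw [← hns]; ring
        exact neg_eq_zero.mp this
  intro m hm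
  by_contra hcon
  push_neg at hcon
  have := key _ m rfl (by intro a ha hle; exact hcon a ha hle)
  rw [MvPolynomial.mem_support_iff] at hm
  exact hm this

/-- evaluation setting variables of `W` to `1`. -/
def eW (K : Type) [Field K] {σ : Type} (W : Set σ) :
    MvPolynomial σ K →ₐ[K] MvPolynomial σ K :=
  aeval (fun u => if u ∈ W then 1 else X u)

lemma sub_eW_mem (W : Set σ) (f : MvPolynomial σ K) : f - eW K W f ∈ Jspan K W := by
  induction f using MvPolynomial.induction_on with
  | C r => simp [eW]
  | add p q hp hq =>
    have : p + q - eW K W (p + q) = (p - eW K W p) + (q - eW K W q) := by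
      rw [map_add]; ring
    rw [this]; exact add_mem hp hq
  | mul_X p v hp =>
    have hXv : X v - eW K W (X v) ∈ Jspan K W := by
      rw [eW, aeval_X]
      by_cases hv : v ∈ W
      · rw [if_pos hv]
        exact Ideal.subset_span ⟨v, hv, rfl⟩
      · rw [if_neg hv]; simp
    have : p * X v - eW K W (p * X v) =
        (p - eW K W p) * X v + eW K W p * (X v - eW K W (X v)) := by
      rw [map_mul]; ring
    rw [this]
    exact add_mem (Ideal.mul_mem_right _ _ hp) (Ideal.mul_mem_left _ _ hXv)

lemma eW_ker (W : Set σ) {j : MvPolynomial σ K} (hj : j ∈ Jspan K W) : eW K W j = 0 := by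
  have : Jspan K W ≤ RingHom.ker (eW K W).toRingHom := by
    rw [Jspan, Ideal.span_le]
    rintro x ⟨v, hv, rfl⟩
    simp [RingHom.mem_ker, eW, aeval_X, if_pos hv]
  exact this hj

lemma eW_monomial (W : Set σ) (m : σ →₀ ℕ) :
    eW K W (monomial m (1 : K)) = monomial (m.filter (fun u => u ∉ W)) (1 : K) := by
  rw [eW, aeval_monomial, monomial_eq, map_one, C_1, one_mul, one_mul]
  rw [Finsupp.prod, Finsupp.prod_filter_index, Finsupp.support_filter,
    Finset.prod_filter]
  apply Finset.prod_congr rfl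
  intro x _
  by_cases hx : x ∈ W
  · simp [hx]
  · simp [hx]

lemma Jspan_mono {W W' : Set σ} (h : W ⊆ W') : Jspan K W ≤ Jspan K W' :=
  Ideal.span_mono (Set.image_mono h)

/-- Main regularity lemma: `X v - 1` is regular modulo `I(M) + J(W)` when `v ∉ W`. -/
lemma regular_X_sub_one_mod_sup (M : Set (σ →₀ ℕ)) (W : Set σ) (v : σ) (hv : v ∉ W)
    (f : MvPolynomial σ K) (h : (X v - 1) * f ∈ Ispan K M ⊔ Jspan K W) :
    f ∈ Ispan K M ⊔ Jspan K W := by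
  set M' : Set (σ →₀ ℕ) := (fun m => m.filter (fun u => u ∉ W)) '' M with hM'
  have himg : ∀ y ∈ Ispan K M, eW K W y ∈ Ispan K M' := by
    intro y hy
    have : Ideal.map (eW K W).toRingHom (Ispan K M) ≤ Ispan K M' := by
      rw [Ispan, Ideal.map_span]
      apply Ideal.span_le.mpr
      rintro x ⟨_, ⟨m, hm, rfl⟩, rfl⟩
      have : (eW K W).toRingHom ((fun a => monomial a (1:K)) m)
          = monomial (m.filter (fun u => u ∉ W)) 1 := eW_monomial W m
      rw [this]
      exact Ideal.subset_span ⟨_, ⟨m, hm, rfl⟩, rfl⟩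
    exact this (Ideal.mem_map_of_mem _ hy)
  have hM'le : Ispan K M' ≤ Ispan K M ⊔ Jspan K W := by
    rw [Ispan, Ideal.span_le]
    rintro x ⟨_, ⟨m, hm, rfl⟩, rfl⟩
    rw [SetLike.mem_coe]
    show (monomial (m.filter (fun u => u ∉ W)) (1:K)) ∈ _
    set k := m.filter (fun u => u ∈ W) with hk
    set m' := m.filter (fun u => u ∉ W) with hm'd
    have hsplit : m' + k = m := by
      rw [hm'd, hk]
      ext a
      by_cases ha : a ∈ W <;> simp [Finsupp.filter_apply, ha]
    have hek : eW K W (monomial k (1:K)) = 1 := by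
      rw [eW_monomial]
      have : k.filter (fun u => u ∉ W) = 0 := by
        ext a
        by_cases ha : a ∈ W <;> simp [hk, Finsupp.filter_apply, ha]
      rw [this, monomial_zero', C_1]
    have hk1 : monomial k (1:K) - 1 ∈ Jspan K W := by
      have := sub_eW_mem (K := K) W (monomial k (1:K))
      rwa [hek] at this
    have : (monomial m' (1:K)) = monomial m 1 - monomial m' 1 * (monomial k (1:K) - 1) := by
      rw [mul_sub, monomial_mul, one_mul, mul_one, hsplit]; ring
    rw [this]
    apply sub_mem
    · exact Submodule.mem_sup_left (Ideal.subset_span ⟨m, hm, rfl⟩)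
    · exact Submodule.mem_sup_right (Ideal.mul_mem_left _ _ hk1)
  obtain ⟨a, ha, j, hjm, heq⟩ := Submodule.mem_sup.mp h
  have heWf : (X v - 1) * eW K W f ∈ Ispan K M' := by
    have : eW K W ((X v - 1) * f) = (X v - 1) * eW K W f := by
      rw [map_mul, map_sub, map_one, eW, aeval_X, if_neg hv]
    rw [← this, ← heq, map_add, eW_ker W hjm, add_zero]
    exact himg a ha
  have hf' : eW K W f ∈ Ispan K M' := regular_X_sub_one_mod_monomial M' v _ heWf
  have : f = (f - eW K W f) + eW K W f := by ring
  rw [this]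
  exact add_mem (Submodule.mem_sup_right (sub_eW_mem W f)) (hM'le hf')

lemma regular_X_sub_one_mod_J (W : Set σ) (v : σ) (hv : v ∉ W)
    (f : MvPolynomial σ K) (h : (X v - 1) * f ∈ Jspan K W) : f ∈ Jspan K W := by
  have h0 : Ispan K (∅ : Set (σ →₀ ℕ)) = ⊥ := by
    rw [Ispan]; simp
  have := regular_X_sub_one_mod_sup (K := K) ∅ W v hv f ?_
  · rwa [h0, bot_sup_eq] at this
  · rw [h0, bot_sup_eq]; exact h

end MonReg

section BaseChange

variable {S S' : Type} [CommRing S] [CommRing S'] (ρ : S →+* S')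

/-- coefficientwise application of `ρ` on a free module. -/
def mapF {A : Type} (u : A →₀ S) : A →₀ S' := Finsupp.mapRange ρ ρ.map_zero u

lemma mapF_apply {A : Type} (u : A →₀ S) (a : A) : mapF ρ u a = ρ (u a) :=
  Finsupp.mapRange_apply

lemma mapF_add {A : Type} (u v : A →₀ S) : mapF ρ (u + v) = mapF ρ u + mapF ρ v := by
  ext a; simp [mapF_apply, map_add, Finsupp.add_apply]

lemma mapF_zero {A : Type} : mapF ρ (0 : A →₀ S) = 0 := by
  ext a; simp [mapF_apply]

lemma mapF_smul {A : Type} (s : S) (u : A →₀ S) : mapF ρ (s • u) = ρ s • mapF ρ u := by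
  ext a; simp [mapF_apply, Finsupp.smul_apply, smul_eq_mul, map_mul]

lemma mapF_single {A : Type} (a : A) (s : S) :
    mapF ρ (Finsupp.single a s) = Finsupp.single a (ρ s) := by
  ext b
  rw [mapF_apply]
  by_cases hb : a = b
  · subst hb; simp
  · simp [Finsupp.single_apply, hb]

/-- base change of a linear map between free modules. -/
def bch {A C : Type} (f : (A →₀ S) →ₗ[S] (C →₀ S)) : (A →₀ S') →ₗ[S'] (C →₀ S') :=
  Finsupp.lsum S' (fun a => LinearMap.toSpanSingleton S' _ (mapF ρ (f (Finsupp.single a 1))))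

/-- base change for the augmentation (target the ring itself). -/
def bch0 {A : Type} (f : (A →₀ S) →ₗ[S] S) : (A →₀ S') →ₗ[S'] S' :=
  Finsupp.lsum S' (fun a => LinearMap.toSpanSingleton S' _ (ρ (f (Finsupp.single a 1))))

lemma bch_single {A C : Type} (f : (A →₀ S) →ₗ[S] (C →₀ S)) (a : A) (s : S') :
    bch ρ f (Finsupp.single a s) = s • mapF ρ (f (Finsupp.single a 1)) := by
  rw [bch, Finsupp.lsum_single, LinearMap.toSpanSingleton_apply]

lemma bch0_single {A : Type} (f : (A →₀ S) →ₗ[S] S) (a : A) (s : S') :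
    bch0 ρ f (Finsupp.single a s) = s * ρ (f (Finsupp.single a 1)) := by
  rw [bch0, Finsupp.lsum_single, LinearMap.toSpanSingleton_apply, smul_eq_mul]

/-- key semilinearity. -/
lemma bch_mapF {A C : Type} (f : (A →₀ S) →ₗ[S] (C →₀ S)) (u : A →₀ S) :
    bch ρ f (mapF ρ u) = mapF ρ (f u) := by
  induction u using Finsupp.induction with
  | zero => simp [mapF_zero, map_zero]
  | single_add a s u _ _ ih =>
    rw [mapF_add, map_add, ih, map_add, mapF_add, mapF_single, bch_single]
    congr 1
    have : (Finsupp.single a s : A →₀ S) = s • Finsupp.single a 1 := by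
      rw [Finsupp.smul_single, smul_eq_mul, mul_one]
    rw [this, map_smul, mapF_smul]

lemma bch0_mapF {A : Type} (f : (A →₀ S) →ₗ[S] S) (u : A →₀ S) :
    bch0 ρ f (mapF ρ u) = ρ (f u) := by
  induction u using Finsupp.induction with
  | zero => simp [mapF_zero, map_zero]
  | single_add a s u _ _ ih =>
    rw [mapF_add, map_add, ih, map_add, map_add, mapF_single, bch0_single]
    congr 1
    have : (Finsupp.single a s : A →₀ S) = s • Finsupp.single a 1 := by
      rw [Finsupp.smul_single, smul_eq_mul, mul_one]
    rw [this, map_smul, smul_eq_mul, map_mul, mul_comm]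

lemma bch_comp {A B C : Type} (f : (B →₀ S) →ₗ[S] (C →₀ S)) (g : (A →₀ S) →ₗ[S] (B →₀ S)) :
    (bch ρ f).comp (bch ρ g) = bch ρ (f.comp g) := by
  apply Finsupp.lhom_ext
  intro a s
  rw [LinearMap.comp_apply, bch_single, map_smul, bch_mapF, bch_single, LinearMap.comp_apply]

lemma bch0_comp {A B : Type} (f : (B →₀ S) →ₗ[S] S) (g : (A →₀ S) →ₗ[S] (B →₀ S)) :
    (bch0 ρ f).comp (bch ρ g) = bch0 ρ (f.comp g) := by
  apply Finsupp.lhom_ext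
  intro a s
  rw [LinearMap.comp_apply, bch_single, map_smul, bch0_mapF, bch0_single, LinearMap.comp_apply,
    smul_eq_mul]

lemma bch_zero {A C : Type} : bch ρ (0 : (A →₀ S) →ₗ[S] (C →₀ S)) = 0 := by
  apply Finsupp.lhom_ext
  intro a s
  rw [bch_single]
  simp [mapF_zero]

/-- the range of the base-changed augmentation is the image ideal of the range. -/
lemma bch0_range {A : Type} (f : (A →₀ S) →ₗ[S] S) :
    LinearMap.range (bch0 ρ f) = Ideal.map ρ (LinearMap.range f) := by
  have h1 : (LinearMap.range f : Ideal S) = Ideal.span (Set.range fun a => f (Finsupp.single a 1)) := by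
    apply le_antisymm
    · rintro x ⟨u, rfl⟩
      have : f u = u.sum fun a s => s • f (Finsupp.single a 1) := by
        conv_lhs => rw [← Finsupp.sum_single u]
        rw [map_finsuppSum]
        apply Finsupp.sum_congr
        intro a _
        have : (Finsupp.single a (u a) : A →₀ S) = u a • Finsupp.single a 1 := by
          rw [Finsupp.smul_single, smul_eq_mul, mul_one]
        rw [this, map_smul]
      rw [this]
      apply Submodule.sum_mem
      intro a _
      exact Submodule.smul_mem _ _ (Ideal.subset_span ⟨a, rfl⟩)
    · rw [Ideal.span_le]
      rintro x ⟨a, rfl⟩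
      exact ⟨Finsupp.single a 1, rfl⟩
  have h2 : LinearMap.range (bch0 ρ f)
      = Ideal.span (Set.range fun a => ρ (f (Finsupp.single a 1))) := by
    apply le_antisymm
    · rintro x ⟨u, rfl⟩
      have : bch0 ρ f u = u.sum fun a s => s • ρ (f (Finsupp.single a 1)) := by
        conv_lhs => rw [← Finsupp.sum_single u]
        rw [map_finsuppSum]
        apply Finsupp.sum_congr
        intro a _
        rw [bch0_single, smul_eq_mul]
      rw [this]
      apply Submodule.sum_mem
      intro a _
      exact Submodule.smul_mem _ _ (Ideal.subset_span ⟨a, rfl⟩)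
    · rw [Ideal.span_le]
      rintro x ⟨a, rfl⟩
      exact ⟨Finsupp.single a 1, by rw [bch0_single, one_mul]⟩
  rw [h2, h1, Ideal.map_span, ← Set.range_comp]
  rfl

end BaseChange

section Chase
variable {σ K : Type} [Field K]

local notation "S" => MvPolynomial σ K

lemma Jspan_insert (v : σ) (W : Set σ) :
    Jspan K (insert v W) = Ideal.span (insert ((X v : S) - 1)
      ((fun u => (X u : S) - 1) '' W)) := by
  rw [Jspan, Set.image_insert_eq]

lemma span_insert_decomp {v : σ} {W : Set σ} {s : S}
    (h : s ∈ Jspan K (insert v W)) : ∃ a : S, s - a * ((X v : S) - 1) ∈ Jspan K W := by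
  rw [Jspan_insert, Ideal.mem_span_insert] at h
  obtain ⟨a, z, hz, rfl⟩ := h
  exact ⟨a, by simpa [Jspan] using hz⟩

/-- linear image of an element with coordinates in an ideal, target `S`. -/
lemma coords_mem_apply0 {A : Type} (J : Ideal S) (f : (A →₀ S) →ₗ[MvPolynomial σ K] S)
    (x : A →₀ S) (hx : ∀ b, x b ∈ J) : f x ∈ J := by
  have hrw : f x = x.sum fun b s => s • f (Finsupp.single b 1) := by
    conv_lhs => rw [← Finsupp.sum_single x]
    rw [map_finsuppSum]
    apply Finsupp.sum_congr
    intro b _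
    rw [show (Finsupp.single b (x b) : A →₀ S) = x b • Finsupp.single b 1 by
      rw [Finsupp.smul_single, smul_eq_mul, mul_one], map_smul]
  rw [hrw]
  apply Submodule.sum_mem
  intro b _
  show x b • f (Finsupp.single b 1) ∈ J
  rw [smul_eq_mul]
  exact Ideal.mul_mem_right _ _ (hx b)

/-- linear image of an element with coordinates in an ideal, target free. -/
lemma coords_mem_apply {A C : Type} (J : Ideal S) (f : (A →₀ S) →ₗ[MvPolynomial σ K] (C →₀ S))
    (x : A →₀ S) (hx : ∀ b, x b ∈ J) : ∀ c, (f x) c ∈ J := by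
  intro c
  have hrw : f x = x.sum fun b s => s • f (Finsupp.single b 1) := by
    conv_lhs => rw [← Finsupp.sum_single x]
    rw [map_finsuppSum]
    apply Finsupp.sum_congr
    intro b _
    rw [show (Finsupp.single b (x b) : A →₀ S) = x b • Finsupp.single b 1 by
      rw [Finsupp.smul_single, smul_eq_mul, mul_one], map_smul]
  rw [hrw, Finsupp.sum_apply]
  apply Submodule.sum_mem
  intro b _
  show (x b • f (Finsupp.single b 1)) c ∈ J
  rw [Finsupp.smul_apply, smul_eq_mul]
  exact Ideal.mul_mem_right _ _ (hx b)

theorem chase (M : Set (σ →₀ ℕ)) (B : ℕ → Type)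
    (d0 : (B 0 →₀ MvPolynomial σ K) →ₗ[MvPolynomial σ K] MvPolynomial σ K)
    (d : ∀ i, (B (i+1) →₀ MvPolynomial σ K) →ₗ[MvPolynomial σ K] (B i →₀ MvPolynomial σ K))
    (range_d0 : LinearMap.range d0 = Ispan K M)
    (exact0 : LinearMap.ker d0 = LinearMap.range (d 0))
    (exactd : ∀ i, LinearMap.ker (d i) = LinearMap.range (d (i+1)))
    (T : Finset σ) :
    (∀ x : B 0 →₀ S, d0 x ∈ Jspan K (↑T : Set σ) →
      ∃ w, ∀ b, (x - d 0 w) b ∈ Jspan K (↑T : Set σ)) ∧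
    (∀ i (x : B (i+1) →₀ S), (∀ b, (d i x) b ∈ Jspan K (↑T : Set σ)) →
      ∃ w, ∀ b, (x - d (i+1) w) b ∈ Jspan K (↑T : Set σ)) := by
  induction T using Finset.induction_on with
  | empty =>
    have hbot : Jspan K (↑(∅ : Finset σ) : Set σ) = ⊥ := by
      rw [Finset.coe_empty, Jspan, Set.image_empty, Ideal.span_empty]
    rw [hbot]
    constructor
    · intro x hx
      have : x ∈ LinearMap.ker d0 := by
        rw [LinearMap.mem_ker]
        simpa using hx
      rw [exact0] at this
      obtain ⟨w, hw⟩ := this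
      exact ⟨w, fun b => by simp [hw]⟩
    · intro i x hx
      have : x ∈ LinearMap.ker (d i) := by
        rw [LinearMap.mem_ker]
        apply Finsupp.ext
        intro b
        simpa using hx b
      rw [exactd i] at this
      obtain ⟨w, hw⟩ := this
      exact ⟨w, fun b => by simp [hw]⟩
  | @insert v T hv ih =>
    set y : S := (X v : S) - 1 with hy
    have hvT : v ∉ (↑T : Set σ) := by simpa using hv
    have hcoe : (↑(insert v T) : Set σ) = insert v (↑T : Set σ) := Finset.coe_insert v T
    have hyJ : y ∈ Jspan K (↑(insert v T) : Set σ) := by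
      rw [hcoe, Jspan]
      exact Ideal.subset_span ⟨v, Set.mem_insert v _, rfl⟩
    have hle : Jspan K (↑T : Set σ) ≤ Jspan K (↑(insert v T) : Set σ) := by
      rw [hcoe]; exact Jspan_mono (Set.subset_insert _ _)
    -- decomposition function
    have gex : ∀ s : S, ∃ a : S, (s ∈ Jspan K (↑(insert v T) : Set σ) →
        s - a * y ∈ Jspan K (↑T : Set σ)) ∧ (s = 0 → a = 0) := by
      intro s
      by_cases h0 : s = 0
      · exact ⟨0, fun _ => by simp [h0], fun _ => rfl⟩
      · by_cases hs : s ∈ Jspan K (↑(insert v T) : Set σ)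
        · rw [hcoe] at hs
          obtain ⟨a, ha⟩ := span_insert_decomp hs
          exact ⟨a, fun _ => ha, fun h => absurd h h0⟩
        · exact ⟨0, fun h => absurd h hs, fun _ => rfl⟩
    choose gf hgf hgf0 using gex
    have hgf0' : gf 0 = 0 := hgf0 0 rfl
    constructor
    · -- Pred1
      intro x hx
      obtain ⟨mm, hmm⟩ : ∃ a : S, d0 x - a * y ∈ Jspan K (↑T : Set σ) := by
        rw [hcoe] at hx
        obtain ⟨a, ha⟩ := span_insert_decomp hx
        exact ⟨a, ha⟩
      -- y * mm ∈ Ispan M ⊔ Jspan T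
      have hym : y * mm ∈ Ispan K M ⊔ Jspan K (↑T : Set σ) := by
        have h1 : d0 x ∈ Ispan K M := by
          rw [← range_d0]; exact ⟨x, rfl⟩
        have : y * mm = d0 x - (d0 x - mm * y) := by ring
        rw [this]
        exact sub_mem (Submodule.mem_sup_left h1) (Submodule.mem_sup_right hmm)
      have hmI : mm ∈ Ispan K M ⊔ Jspan K (↑T : Set σ) :=
        regular_X_sub_one_mod_sup M _ v hvT mm hym
      obtain ⟨aI, haI, j', hj', heq⟩ := Submodule.mem_sup.mp hmI
      obtain ⟨u, hu⟩ : ∃ u, d0 u = aI := by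
        rw [← range_d0] at haI; exact haI
      have hx' : d0 (x - y • u) ∈ Jspan K (↑T : Set σ) := by
        rw [map_sub, map_smul, hu, smul_eq_mul]
        have : d0 x - y * aI = (d0 x - mm * y) + y * j' := by
          rw [← heq]; ring
        rw [this]
        exact add_mem hmm (Ideal.mul_mem_left _ _ hj')
      obtain ⟨w, hw⟩ := ih.1 (x - y • u) hx'
      refine ⟨w, fun b => ?_⟩
      have : (x - d 0 w) b = y * (u b) + ((x - y • u) - d 0 w) b := by
        simp only [Finsupp.sub_apply, Finsupp.smul_apply, smul_eq_mul]
        ring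
      rw [this]
      exact add_mem (Ideal.mul_mem_right _ _ hyJ) (hle (hw b))
    · -- Pred2
      intro i x hx
      set mm : B i →₀ S := Finsupp.mapRange gf hgf0' (d i x) with hmdef
      have hj : ∀ b, (d i x) b - y * mm b ∈ Jspan K (↑T : Set σ) := by
        intro b
        rw [hmdef, Finsupp.mapRange_apply, mul_comm]
        exact hgf _ (hx b)
      -- apply the next differential
      cases i with
      | zero =>
        have hd0 : d0 (d 0 x) = 0 := by
          have : d 0 x ∈ LinearMap.ker d0 := by
            rw [exact0]; exact ⟨x, rfl⟩
          exact this
        have hymem : y * d0 mm ∈ Jspan K (↑T : Set σ) := by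
          have h1 : d0 ((d 0 x) - y • mm) ∈ Jspan K (↑T : Set σ) :=
            coords_mem_apply0 _ d0 _ (fun b => by
              simpa [Finsupp.sub_apply, Finsupp.smul_apply, smul_eq_mul] using hj b)
          rw [map_sub, map_smul, hd0, smul_eq_mul, zero_sub] at h1
          simpa using neg_mem h1
        have hdm : d0 mm ∈ Jspan K (↑T : Set σ) :=
          regular_X_sub_one_mod_J _ v hvT _ hymem
        obtain ⟨u, hu⟩ := ih.1 mm hdm
        have hx' : ∀ b, (d 0 (x - y • u)) b ∈ Jspan K (↑T : Set σ) := by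
          intro b
          have : (d 0 (x - y • u)) b = y * ((mm - d 0 u) b) + ((d 0 x) b - y * mm b) := by
            rw [map_sub, map_smul]
            simp only [Finsupp.sub_apply, Finsupp.smul_apply, smul_eq_mul]
            ring
          rw [this]
          exact add_mem (Ideal.mul_mem_left _ _ (hu b)) (hj b)
        obtain ⟨w, hw⟩ := ih.2 0 (x - y • u) hx'
        refine ⟨w, fun b => ?_⟩
        have : (x - d 1 w) b = y * (u b) + ((x - y • u) - d 1 w) b := by
          simp only [Finsupp.sub_apply, Finsupp.smul_apply, smul_eq_mul]
          ring
        rw [this]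
        exact add_mem (Ideal.mul_mem_right _ _ hyJ) (hle (hw b))
      | succ i' =>
        have hd0 : d i' (d (i'+1) x) = 0 := by
          have : d (i'+1) x ∈ LinearMap.ker (d i') := by
            rw [exactd i']; exact ⟨x, rfl⟩
          exact this
        have hdm : ∀ c, (d i' mm) c ∈ Jspan K (↑T : Set σ) := by
          intro c
          have h1 : ∀ c, (d i' ((d (i'+1) x) - y • mm)) c ∈ Jspan K (↑T : Set σ) :=
            coords_mem_apply _ (d i') _ (fun b => by
              simpa [Finsupp.sub_apply, Finsupp.smul_apply, smul_eq_mul] using hj b)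
          have h2 := h1 c
          rw [map_sub, map_smul, hd0, zero_sub] at h2
          have h3 : y * ((d i' mm) c) ∈ Jspan K (↑T : Set σ) := by
            have := neg_mem h2
            simpa [Finsupp.smul_apply, smul_eq_mul] using this
          exact regular_X_sub_one_mod_J _ v hvT _ h3
        obtain ⟨u, hu⟩ := ih.2 i' mm hdm
        have hx' : ∀ b, (d (i'+1) (x - y • u)) b ∈ Jspan K (↑T : Set σ) := by
          intro b
          have : (d (i'+1) (x - y • u)) b
              = y * ((mm - d (i'+1) u) b) + ((d (i'+1) x) b - y * mm b) := by
            rw [map_sub, map_smul]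
            simp only [Finsupp.sub_apply, Finsupp.smul_apply, smul_eq_mul]
            ring
          rw [this]
          exact add_mem (Ideal.mul_mem_left _ _ (hu b)) (hj b)
        obtain ⟨w, hw⟩ := ih.2 (i'+1) (x - y • u) hx'
        refine ⟨w, fun b => ?_⟩
        have : (x - d (i'+2) w) b = y * (u b) + ((x - y • u) - d (i'+2) w) b := by
          simp only [Finsupp.sub_apply, Finsupp.smul_apply, smul_eq_mul]
          ring
        rw [this]
        exact add_mem (Ideal.mul_mem_right _ _ hyJ) (hle (hw b))

end Chase

section PiIota

variable (K : Type) [Field K] (P Q : Type) [PartialOrder P] [PartialOrder Q]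
  [Fintype P] [Fintype Q] (P' : Finset P)

/-- the projection sending `x_{p,q} ↦ x_{p,q}` for `p ∈ P'` and to `1` otherwise. -/
def piPQ : MvPolynomial (P × Q) K →ₐ[K] MvPolynomial (↥P' × Q) K :=
  aeval (fun v => if h : v.1 ∈ P' then (X (⟨v.1, h⟩, v.2) : MvPolynomial (↥P' × Q) K) else 1)

/-- the inclusion `S_{P',Q} → S_{P,Q}`. -/
def iotaPQ : MvPolynomial (↥P' × Q) K →ₐ[K] MvPolynomial (P × Q) K :=
  aeval (fun w => (X ((w.1 : P), w.2) : MvPolynomial (P × Q) K))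

lemma piPQ_iotaPQ (f : MvPolynomial (↥P' × Q) K) : piPQ K P Q P' (iotaPQ K P Q P' f) = f := by
  have : (piPQ K P Q P').comp (iotaPQ K P Q P') = AlgHom.id K _ := by
    apply algHom_ext
    intro w
    rw [AlgHom.comp_apply, iotaPQ, aeval_X, piPQ, aeval_X, dif_pos w.1.2]
    simp
  calc piPQ K P Q P' (iotaPQ K P Q P' f) = ((piPQ K P Q P').comp (iotaPQ K P Q P')) f := rfl
  _ = f := by rw [this]; rfl

/-- the variables which get killed. -/
def Zset : Set (P × Q) := {v | v.1 ∉ P'}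

lemma piPQ_ker (f : MvPolynomial (P × Q) K) :
    piPQ K P Q P' f = 0 ↔ f ∈ Jspan K (Zset P Q P') := by
  constructor
  · intro hf
    have key : ∀ g : MvPolynomial (P × Q) K,
        g - iotaPQ K P Q P' (piPQ K P Q P' g) ∈ Jspan K (Zset P Q P') := by
      intro g
      induction g using MvPolynomial.induction_on with
      | C r => simp [piPQ, iotaPQ]
      | add p q hp hq =>
        have : p + q - iotaPQ K P Q P' (piPQ K P Q P' (p + q))
            = (p - iotaPQ K P Q P' (piPQ K P Q P' p))
              + (q - iotaPQ K P Q P' (piPQ K P Q P' q)) := by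
          rw [map_add, map_add]; ring
        rw [this]; exact add_mem hp hq
      | mul_X p v hp =>
        have hXv : X v - iotaPQ K P Q P' (piPQ K P Q P' (X v)) ∈ Jspan K (Zset P Q P') := by
          rw [piPQ, aeval_X]
          by_cases hv : v.1 ∈ P'
          · rw [dif_pos hv, iotaPQ, aeval_X]
            simp
          · rw [dif_neg hv, map_one]
            exact Ideal.subset_span ⟨v, hv, rfl⟩
        have : p * X v - iotaPQ K P Q P' (piPQ K P Q P' (p * X v))
            = (p - iotaPQ K P Q P' (piPQ K P Q P' p)) * X v
              + iotaPQ K P Q P' (piPQ K P Q P' p)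
                * (X v - iotaPQ K P Q P' (piPQ K P Q P' (X v))) := by
          rw [map_mul, map_mul]; ring
        rw [this]
        exact add_mem (Ideal.mul_mem_right _ _ hp) (Ideal.mul_mem_left _ _ hXv)
    have := key f
    rwa [hf, map_zero, sub_zero] at this
  · intro hf
    have : Jspan K (Zset P Q P') ≤ RingHom.ker (piPQ K P Q P').toRingHom := by
      rw [Jspan, Ideal.span_le]
      rintro x ⟨v, hv, rfl⟩
      have : piPQ K P Q P' (X v) = 1 := by
        rw [piPQ, aeval_X, dif_neg hv]
      simp [RingHom.mem_ker, this]
    exact this hf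

/-- restriction of an order-hom. -/
def restrO (Φ : P →o Q) : ↥P' →o Q :=
  ⟨fun x => Φ ↑x, fun _ _ h => Φ.mono h⟩

lemma piPQ_gen (Φ : P →o Q) :
    piPQ K P Q P' (∏ p : P, (X (p, Φ p) : MvPolynomial (P × Q) K))
      = ∏ x : ↥P', (X (x, Φ ↑x) : MvPolynomial (↥P' × Q) K) := by
  rw [map_prod]
  have h1 : ∀ p : P, piPQ K P Q P' (X (p, Φ p))
      = if h : p ∈ P' then (X (⟨p, h⟩, Φ p) : MvPolynomial (↥P' × Q) K) else 1 := by
    intro p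
    rw [piPQ, aeval_X]
  calc ∏ p : P, piPQ K P Q P' (X (p, Φ p))
      = ∏ p : P, if h : p ∈ P' then (X (⟨p, h⟩, Φ p) : MvPolynomial (↥P' × Q) K) else 1 :=
        Finset.prod_congr rfl (fun p _ => h1 p)
    _ = ∏ p ∈ P', if h : p ∈ P' then (X (⟨p, h⟩, Φ p) : MvPolynomial (↥P' × Q) K) else 1 :=
        (Finset.prod_subset (Finset.subset_univ P') (fun p _ hp => dif_neg hp)).symm
    _ = ∏ x : ↥P', if h : (x : P) ∈ P' then (X (⟨x, h⟩, Φ ↑x) : MvPolynomial (↥P' × Q) K) else 1 :=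
        (Finset.prod_coe_sort P' _).symm
    _ = ∏ x : ↥P', (X (x, Φ ↑x) : MvPolynomial (↥P' × Q) K) := by
        apply Finset.prod_congr rfl
        intro x _
        rw [dif_pos x.2]

/-- The image of `L(P,Q)` under `π` is `L(P',Q)`. -/
lemma piPQ_map_LPQ
    (hext : ∀ φ : ↥P' →o Q, ∃ Φ : P →o Q, ∀ p : ↥P', Φ ↑p = φ p) :
    Ideal.map (piPQ K P Q P').toRingHom (LPQ K P Q) = LPQ K ↥P' Q := by
  rw [LPQ, Ideal.map_span]
  apply le_antisymm
  · rw [Ideal.span_le]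
    rintro x ⟨_, ⟨Φ, rfl⟩, rfl⟩
    have : (piPQ K P Q P').toRingHom (∏ p : P, (X (p, Φ p) : MvPolynomial (P × Q) K))
        = ∏ x : ↥P', (X (x, (restrO P Q P' Φ) x) : MvPolynomial (↥P' × Q) K) := piPQ_gen K P Q P' Φ
    rw [this]
    exact Ideal.subset_span ⟨restrO P Q P' Φ, rfl⟩
  · rw [LPQ, Ideal.span_le]
    rintro x ⟨φ, rfl⟩
    obtain ⟨Φ, hΦ⟩ := hext φ
    have heq : ∏ x : ↥P', (X (x, φ x) : MvPolynomial (↥P' × Q) K)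
        = piPQ K P Q P' (∏ p : P, (X (p, Φ p) : MvPolynomial (P × Q) K)) := by
      refine Eq.trans ?_ (piPQ_gen K P Q P' Φ).symm
      exact Finset.prod_congr rfl (fun x _ => by rw [hΦ x])
    show (∏ x : ↥P', (X (x, φ x) : MvPolynomial (↥P' × Q) K)) ∈ _
    rw [SetLike.mem_coe, heq]
    exact Ideal.subset_span ⟨_, ⟨Φ, rfl⟩, rfl⟩

/-- `L(P,Q)` as a monomial ideal. -/
def MIdeg : Set ((P × Q) →₀ ℕ) :=
  Set.range fun φ : P →o Q => ∑ p : P, Finsupp.single (p, φ p) (1 : ℕ)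

lemma prod_X_eq_monomial {σ ι K : Type} [Field K] (s : Finset ι) (g : ι → σ) :
    (∏ i ∈ s, (X (g i) : MvPolynomial σ K))
      = monomial (∑ i ∈ s, Finsupp.single (g i) 1) (1 : K) := by
  classical
  induction s using Finset.induction_on with
  | empty => simp [monomial_zero', C_1]
  | @insert a s ha ih =>
    rw [Finset.prod_insert ha, Finset.sum_insert ha, ih, X, monomial_mul, one_mul]

lemma LPQ_eq_Ispan : LPQ K P Q = Ispan K (MIdeg P Q) := by
  rw [LPQ, Ispan, MIdeg]
  congr 1
  rw [← Set.range_comp]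
  apply Set.ext
  intro x
  constructor
  · rintro ⟨φ, rfl⟩
    exact ⟨φ, (prod_X_eq_monomial Finset.univ (fun p => (p, φ p))).symm⟩
  · rintro ⟨φ, rfl⟩
    exact ⟨φ, prod_X_eq_monomial Finset.univ (fun p => (p, φ p))⟩

end PiIota

section Lifting
variable {R : Type} [CommRing R]

/-- Chain lifting: given a free complex `(A, D)` with `D∘D = 0` and an exact free complex
`(C, E)`, with compatible augmentations, produce a chain map. -/
theorem chain_lift (A C : ℕ → Type)
    (D0 : (A 0 →₀ R) →ₗ[R] R) (D : ∀ i, (A (i+1) →₀ R) →ₗ[R] (A i →₀ R))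
    (E0 : (C 0 →₀ R) →ₗ[R] R) (E : ∀ i, (C (i+1) →₀ R) →ₗ[R] (C i →₀ R))
    (hD0 : ∀ x, D0 (D 0 x) = 0)
    (hDD : ∀ i x, D i (D (i+1) x) = 0)
    (hE0 : ∀ x, E0 x = 0 → ∃ w, E 0 w = x)
    (hEE : ∀ i x, E i x = 0 → ∃ w, E (i+1) w = x)
    (hsub : ∀ x, D0 x ∈ LinearMap.range E0) :
    ∃ f : ∀ i, (A i →₀ R) →ₗ[R] (C i →₀ R),
      (E0.comp (f 0) = D0) ∧ ∀ i, (E i).comp (f (i+1)) = (f i).comp (D i) := by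
  -- level 0
  have h0 : ∀ a : A 0, ∃ w, E0 w = D0 (Finsupp.single a 1) := fun a => hsub _
  choose w0 hw0 using h0
  set f0 : (A 0 →₀ R) →ₗ[R] (C 0 →₀ R) :=
    Finsupp.lsum R (fun a => LinearMap.toSpanSingleton R _ (w0 a)) with hf0
  have hf0aug : E0.comp f0 = D0 := by
    apply Finsupp.lhom_ext
    intro a s
    rw [LinearMap.comp_apply, hf0, Finsupp.lsum_single, LinearMap.toSpanSingleton_apply,
      map_smul, hw0]
    have : (Finsupp.single a s : A 0 →₀ R) = s • Finsupp.single a 1 := by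
      rw [Finsupp.smul_single, smul_eq_mul, mul_one]
    rw [this, map_smul]
  -- level 1
  have h1 : ∀ a : A 1, ∃ w, E 0 w = f0 (D 0 (Finsupp.single a 1)) := by
    intro a
    apply hE0
    have : E0 (f0 (D 0 (Finsupp.single a 1))) = D0 (D 0 (Finsupp.single a 1)) := by
      rw [← LinearMap.comp_apply, hf0aug]
    rw [this, hD0]
  choose w1 hw1 using h1
  set f1 : (A 1 →₀ R) →ₗ[R] (C 1 →₀ R) :=
    Finsupp.lsum R (fun a => LinearMap.toSpanSingleton R _ (w1 a)) with hf1
  have hf1c : (E 0).comp f1 = f0.comp (D 0) := by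
    apply Finsupp.lhom_ext
    intro a s
    rw [LinearMap.comp_apply, LinearMap.comp_apply, hf1, Finsupp.lsum_single,
      LinearMap.toSpanSingleton_apply, map_smul, hw1]
    have : (Finsupp.single a s : A 1 →₀ R) = s • Finsupp.single a 1 := by
      rw [Finsupp.smul_single, smul_eq_mul, mul_one]
    rw [this, map_smul, map_smul]
  -- recursion
  let T : ℕ → Type := fun i =>
    {pq : ((A i →₀ R) →ₗ[R] (C i →₀ R)) × ((A (i+1) →₀ R) →ₗ[R] (C (i+1) →₀ R)) //
      (E i).comp pq.2 = pq.1.comp (D i)}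
  have hnext : ∀ i (t : T i) (a : A (i+2)), ∃ w,
      E (i+1) w = t.1.2 (D (i+1) (Finsupp.single a 1)) := by
    intro i t a
    apply hEE
    have : E i (t.1.2 (D (i+1) (Finsupp.single a 1)))
        = t.1.1 (D i (D (i+1) (Finsupp.single a 1))) := by
      rw [← LinearMap.comp_apply, t.2, LinearMap.comp_apply]
    rw [this, hDD, map_zero]
  choose wn hwn using hnext
  have stepPf : ∀ i (t : T i),
      (E (i+1)).comp (Finsupp.lsum R (fun a => LinearMap.toSpanSingleton R _ (wn i t a)))
        = (t.1.2).comp (D (i+1)) := by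
    intro i t
    apply Finsupp.lhom_ext
    intro a s
    rw [LinearMap.comp_apply, LinearMap.comp_apply, Finsupp.lsum_single,
      LinearMap.toSpanSingleton_apply, map_smul, hwn]
    have : (Finsupp.single a s : A (i+2) →₀ R) = s • Finsupp.single a 1 := by
      rw [Finsupp.smul_single, smul_eq_mul, mul_one]
    rw [this, map_smul, map_smul]
  let step : ∀ i, T i → T (i+1) := fun i t =>
    ⟨⟨t.1.2, Finsupp.lsum R (fun a => LinearMap.toSpanSingleton R _ (wn i t a))⟩, stepPf i t⟩
  let seq : ∀ i, T i := fun i => Nat.rec ⟨⟨f0, f1⟩, hf1c⟩ step i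
  have hseq_succ : ∀ i, (seq (i+1)).1.1 = (seq i).1.2 := fun i => rfl
  refine ⟨fun i => (seq i).1.1, ?_, ?_⟩
  · show E0.comp (⟨⟨f0, f1⟩, hf1c⟩ : T 0).1.1 = D0
    exact hf0aug
  · intro i
    exact (seq i).2

/-- Homotopy construction: a self chain map `s` of an exact free complex which is
augmentation-compatible with `0` is null-homotopic (in the form we need). -/
theorem homotopy_decomp (A : ℕ → Type)
    (D0 : (A 0 →₀ R) →ₗ[R] R) (D : ∀ i, (A (i+1) →₀ R) →ₗ[R] (A i →₀ R))
    (hDD : ∀ i x, D i (D (i+1) x) = 0)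
    (hE0 : ∀ x, D0 x = 0 → ∃ w, D 0 w = x)
    (hEE : ∀ i x, D i x = 0 → ∃ w, D (i+1) w = x)
    (s : ∀ i, (A i →₀ R) →ₗ[R] (A i →₀ R))
    (hs0 : ∀ x, D0 (s 0 x) = 0)
    (hscomm : ∀ i, (D i).comp (s (i+1)) = (s i).comp (D i)) :
    ∀ i, ∃ (g : (A i →₀ R) →ₗ[R] (A (i+1) →₀ R)) (cor : (A i →₀ R) →ₗ[R] (A i →₀ R)),
      ((D i).comp g + cor = s i) ∧
      (match i with
       | 0 => cor = 0
       | j+1 => ∃ pg : (A j →₀ R) →ₗ[R] (A (j+1) →₀ R), cor = pg.comp (D j)) := by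
  -- recursive construction carrying the kernel property
  let T : ℕ → Type := fun i =>
    {gc : ((A i →₀ R) →ₗ[R] (A (i+1) →₀ R)) × ((A i →₀ R) →ₗ[R] (A i →₀ R)) //
      ((D i).comp gc.1 + gc.2 = s i) ∧ (∀ x, gc.2 (D i x) = 0) ∧
      (match i with
       | 0 => gc.2 = 0
       | j+1 => ∃ pg : (A j →₀ R) →ₗ[R] (A (j+1) →₀ R), gc.2 = pg.comp (D j))}
  have base : T 0 := by
    have h0 : ∀ a : A 0, ∃ w, D 0 w = s 0 (Finsupp.single a 1) := fun a => hE0 _ (hs0 _)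
    choose w0 hw0 using h0
    refine ⟨⟨Finsupp.lsum R (fun a => LinearMap.toSpanSingleton R _ (w0 a)), 0⟩, ?_, ?_, rfl⟩
    · rw [add_zero]
      apply Finsupp.lhom_ext
      intro a c
      rw [LinearMap.comp_apply, Finsupp.lsum_single, LinearMap.toSpanSingleton_apply,
        map_smul, hw0]
      have : (Finsupp.single a c : A 0 →₀ R) = c • Finsupp.single a 1 := by
        rw [Finsupp.smul_single, smul_eq_mul, mul_one]
      rw [this, map_smul]
    · intro x; rfl
  have step : ∀ i, T i → T (i+1) := by
    intro i tv
    obtain ⟨⟨g, cor⟩, hcomm, hker, _⟩ := tv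
    have hnext : ∀ a : A (i+1), ∃ w,
        D (i+1) w = s (i+1) (Finsupp.single a 1) - g (D i (Finsupp.single a 1)) := by
      intro a
      apply hEE
      rw [map_sub]
      have h1 : D i (s (i+1) (Finsupp.single a 1)) = s i (D i (Finsupp.single a 1)) := by
        rw [← LinearMap.comp_apply, hscomm i, LinearMap.comp_apply]
      have h2 : D i (g (D i (Finsupp.single a 1))) + cor (D i (Finsupp.single a 1))
          = s i (D i (Finsupp.single a 1)) := by
        have := congrArg (fun (t : (A i →₀ R) →ₗ[R] (A i →₀ R)) =>
          t (D i (Finsupp.single a 1))) hcomm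
        simpa using this
      rw [hker] at h2
      rw [add_zero] at h2
      rw [h1, h2, sub_self]
    choose wn hwn using hnext
    refine ⟨⟨Finsupp.lsum R (fun a => LinearMap.toSpanSingleton R _ (wn a)),
      g.comp (D i)⟩, ?_, ?_, ⟨g, rfl⟩⟩
    · apply Finsupp.lhom_ext
      intro a c
      rw [LinearMap.add_apply, LinearMap.comp_apply, Finsupp.lsum_single,
        LinearMap.toSpanSingleton_apply, map_smul, hwn, LinearMap.comp_apply]
      have hc : (Finsupp.single a c : A (i+1) →₀ R) = c • Finsupp.single a 1 := by
        rw [Finsupp.smul_single, smul_eq_mul, mul_one]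
      rw [hc, map_smul, map_smul, map_smul, ← smul_add, sub_add_cancel]
    · intro x
      show g (D i (D (i+1) x)) = 0
      rw [hDD, map_zero]
  let seq : ∀ i, T i := fun i => Nat.rec base step i
  intro i
  refine ⟨(seq i).1.1, (seq i).1.2, (seq i).2.1, ?_⟩
  have h := (seq i).2.2.2
  cases i with
  | zero => exact h
  | succ j => exact h

end Lifting

section BarFinale
variable {S S' : Type} [CommRing S] [CommRing S'] (ρ : S →+* S')

lemma bch_id {A : Type} : bch ρ (LinearMap.id : (A →₀ S) →ₗ[S] (A →₀ S)) = LinearMap.id := by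
  apply Finsupp.lhom_ext
  intro a s
  rw [bch_single, LinearMap.id_apply, LinearMap.id_apply, mapF_single, map_one,
    Finsupp.smul_single, smul_eq_mul, mul_one]

lemma bch_add {A C : Type} (f g : (A →₀ S) →ₗ[S] (C →₀ S)) :
    bch ρ (f + g) = bch ρ f + bch ρ g := by
  apply Finsupp.lhom_ext
  intro a s
  rw [LinearMap.add_apply, bch_single, bch_single, bch_single, LinearMap.add_apply]
  rw [← smul_add]
  congr 1
  ext c
  simp [mapF, Finsupp.mapRange_apply, Finsupp.add_apply]

/-- if all matrix entries map to zero under `ρ`, the base change is zero. -/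
lemma bch_entries_zero {A C : Type} (f : (A →₀ S) →ₗ[S] (C →₀ S))
    (h : ∀ a c, ρ ((f (Finsupp.single a 1)) c) = 0) : bch ρ f = 0 := by
  apply Finsupp.lhom_ext
  intro a s
  rw [bch_single]
  have : mapF ρ (f (Finsupp.single a 1)) = 0 := by
    ext c
    rw [mapF, Finsupp.mapRange_apply, h a c]
    rfl
  rw [this, smul_zero]
  rfl

lemma bch0_zeromap {A : Type} : bch0 ρ (0 : (A →₀ S) →ₗ[S] S) = 0 := by
  apply Finsupp.lhom_ext
  intro a s
  rw [bch0_single]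
  simp

lemma card_le_of_inj_linear {K : Type} [Field K] {A B : Type} [Fintype A] [Fintype B]
    (f : (A →₀ K) →ₗ[K] (B →₀ K)) (hf : Function.Injective f) :
    Nat.card A ≤ Nat.card B := by
  have h1 : Module.finrank K (A →₀ K) ≤ Module.finrank K (B →₀ K) :=
    LinearMap.finrank_le_finrank_of_injective hf
  rw [Module.finrank_finsupp_self, Module.finrank_finsupp_self] at h1
  rw [Nat.card_eq_fintype_card, Nat.card_eq_fintype_card]
  exact h1

end BarFinale

end Stmt7Aux
/-- Restricting the source poset: if every order-preserving map
`P' → Q` extends to `P`, then the total Betti numbers can only drop. -/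
theorem stmt_7 (K : Type) [Field K] (P Q : Type) [PartialOrder P] [PartialOrder Q]
    [Fintype P] [Fintype Q] (P' : Finset P)
    (hext : ∀ φ : ↥P' →o Q, ∃ Φ : P →o Q, ∀ p : ↥P', Φ ↑p = φ p) :
    ∀ (F : MGMinRes (LPQ K P Q)) (F' : MGMinRes (LPQ K ↥P' Q)) (i : ℕ),
      F'.betaT i ≤ F.betaT i := by
  classical
  intro F F' i
  cases i with
  | zero => exact le_refl 1
  | succ i =>
  show Nat.card (F'.B i) ≤ Nat.card (F.B i)
  letI : ∀ j, Fintype (F.B j) := F.finB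
  letI : ∀ j, Fintype (F'.B j) := F'.finB
  set ρ : MvPolynomial (P × Q) K →+* MvPolynomial (↥P' × Q) K := (piPQ K P Q P').toRingHom
    with hρdef
  set ι : MvPolynomial (↥P' × Q) K →+* MvPolynomial (P × Q) K := (iotaPQ K P Q P').toRingHom
    with hιdef
  set Zfin : Finset (P × Q) := Finset.univ.filter (fun v => v.1 ∉ P') with hZfin
  have hZco : (↑Zfin : Set (P × Q)) = Zset P Q P' := by
    ext v
    simp [hZfin, Zset]
  have hchase := chase (MIdeg P Q) F.B F.d0 F.d
    (by rw [F.range_d0]; exact LPQ_eq_Ispan K P Q) F.exact0 F.exactd Zfin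
  -- section of ρ
  have hsec : ∀ (A : Type) (u : A →₀ MvPolynomial (↥P' × Q) K), mapF ρ (mapF ι u) = u := by
    intro A u
    apply Finsupp.ext
    intro b
    rw [mapF_apply, mapF_apply]
    exact piPQ_iotaPQ K P Q P' (u b)
  have hkill : ∀ (A : Type) (u : A →₀ MvPolynomial (P × Q) K),
      (∀ b, u b ∈ Jspan K (↑Zfin : Set (P × Q))) → mapF ρ u = 0 := by
    intro A u hu
    apply Finsupp.ext
    intro b
    rw [mapF_apply, Finsupp.zero_apply]
    have : u b ∈ Jspan K (Zset P Q P') := by rw [← hZco]; exact hu b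
    have h0 : piPQ K P Q P' (u b) = 0 := (piPQ_ker K P Q P' (u b)).mpr this
    exact h0
  -- exactness of the base-changed complex G
  have gex0 : ∀ v, bch0 ρ F.d0 v = 0 → ∃ w, bch ρ (F.d 0) w = v := by
    intro v hv
    set x := mapF ι v with hx
    have hvx : mapF ρ x = v := hsec _ v
    have h1 : ρ (F.d0 x) = 0 := by
      rw [← bch0_mapF, hvx, hv]
    have h2 : F.d0 x ∈ Jspan K (↑Zfin : Set (P × Q)) := by
      rw [hZco]
      exact (piPQ_ker K P Q P' _).mp h1
    obtain ⟨w0, hw0⟩ := hchase.1 x h2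
    refine ⟨mapF ρ w0, ?_⟩
    have h3 : mapF ρ (x - F.d 0 w0) = 0 := hkill _ _ hw0
    have h4 : mapF ρ x = mapF ρ (F.d 0 w0) := by
      apply Finsupp.ext
      intro b
      have hb : ρ ((x - F.d 0 w0) b) = 0 := by
        have := DFunLike.congr_fun h3 b
        rwa [mapF_apply, Finsupp.zero_apply] at this
      rw [Finsupp.sub_apply, map_sub, sub_eq_zero] at hb
      rw [mapF_apply, mapF_apply]
      exact hb
    rw [bch_mapF, ← h4, hvx]
  have gexd : ∀ j (v : F.B (j+1) →₀ MvPolynomial (↥P' × Q) K),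
      bch ρ (F.d j) v = 0 → ∃ w, bch ρ (F.d (j+1)) w = v := by
    intro j v hv
    set x := mapF ι v with hx
    have hvx : mapF ρ x = v := hsec _ v
    have h1 : mapF ρ (F.d j x) = 0 := by
      rw [← bch_mapF, hvx, hv]
    have h2 : ∀ b, (F.d j x) b ∈ Jspan K (↑Zfin : Set (P × Q)) := by
      intro b
      rw [hZco]
      apply (piPQ_ker K P Q P' _).mp
      have := DFunLike.congr_fun h1 b
      rwa [mapF_apply, Finsupp.zero_apply] at this
    obtain ⟨w0, hw0⟩ := hchase.2 j x h2
    refine ⟨mapF ρ w0, ?_⟩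
    have h3 : mapF ρ (x - F.d (j+1) w0) = 0 := hkill _ _ hw0
    have h4 : mapF ρ x = mapF ρ (F.d (j+1) w0) := by
      apply Finsupp.ext
      intro b
      have hb : ρ ((x - F.d (j+1) w0) b) = 0 := by
        have := DFunLike.congr_fun h3 b
        rwa [mapF_apply, Finsupp.zero_apply] at this
      rw [Finsupp.sub_apply, map_sub, sub_eq_zero] at hb
      rw [mapF_apply, mapF_apply]
      exact hb
    rw [bch_mapF, ← h4, hvx]
  have grange0 : LinearMap.range (bch0 ρ F.d0) = LPQ K ↥P' Q := by
    rw [bch0_range, F.range_d0]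
    exact piPQ_map_LPQ K P Q P' hext
  -- chain conditions for F'
  have hD0' : ∀ x, F'.d0 (F'.d 0 x) = 0 := by
    intro x
    have : F'.d 0 x ∈ LinearMap.ker F'.d0 := by rw [F'.exact0]; exact ⟨x, rfl⟩
    exact this
  have hDD' : ∀ j x, F'.d j (F'.d (j+1) x) = 0 := by
    intro j x
    have : F'.d (j+1) x ∈ LinearMap.ker (F'.d j) := by rw [F'.exactd j]; exact ⟨x, rfl⟩
    exact this
  have hE0' : ∀ x, F'.d0 x = 0 → ∃ w, F'.d 0 w = x := by
    intro x hx
    have : x ∈ LinearMap.ker F'.d0 := hx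
    rw [F'.exact0] at this
    exact this
  have hEE' : ∀ j x, F'.d j x = 0 → ∃ w, F'.d (j+1) w = x := by
    intro j x hx
    have : x ∈ LinearMap.ker (F'.d j) := hx
    rw [F'.exactd j] at this
    exact this
  -- chain conditions for G
  have hzd0 : F.d0.comp (F.d 0) = 0 := by
    apply LinearMap.ext
    intro u
    have : F.d 0 u ∈ LinearMap.ker F.d0 := by rw [F.exact0]; exact ⟨u, rfl⟩
    exact this
  have hzdd : ∀ j, (F.d j).comp (F.d (j+1)) = 0 := by
    intro j
    apply LinearMap.ext
    intro u
    have : F.d (j+1) u ∈ LinearMap.ker (F.d j) := by rw [F.exactd j]; exact ⟨u, rfl⟩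
    exact this
  have hD0G : ∀ x, bch0 ρ F.d0 (bch ρ (F.d 0) x) = 0 := by
    intro x
    have h1 : (bch0 ρ F.d0).comp (bch ρ (F.d 0)) = bch0 ρ (F.d0.comp (F.d 0)) := bch0_comp ρ _ _
    have := LinearMap.congr_fun h1 x
    rw [LinearMap.comp_apply] at this
    rw [this, hzd0, bch0_zeromap]
    rfl
  have hDDG : ∀ j x, bch ρ (F.d j) (bch ρ (F.d (j+1)) x) = 0 := by
    intro j x
    have h1 : (bch ρ (F.d j)).comp (bch ρ (F.d (j+1)))
        = bch ρ ((F.d j).comp (F.d (j+1))) := bch_comp ρ _ _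
    have := LinearMap.congr_fun h1 x
    rw [LinearMap.comp_apply] at this
    rw [this, hzdd j, bch_zero]
    rfl
  -- the two chain maps
  obtain ⟨α, hα0, hαc⟩ := chain_lift F'.B F.B F'.d0 F'.d (bch0 ρ F.d0) (fun j => bch ρ (F.d j))
    hD0' hDD' gex0 gexd
    (fun x => by
      have hm : F'.d0 x ∈ LinearMap.range F'.d0 := ⟨x, rfl⟩
      rw [F'.range_d0] at hm
      exact (SetLike.ext_iff.mp grange0 (F'.d0 x)).mpr hm)
  obtain ⟨β, hβ0, hβc⟩ := chain_lift F.B F'.B (bch0 ρ F.d0) (fun j => bch ρ (F.d j)) F'.d0 F'.d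
    hD0G hDDG hE0' hEE'
    (fun x => by
      have hm : bch0 ρ F.d0 x ∈ LinearMap.range (bch0 ρ F.d0) := ⟨x, rfl⟩
      have hm2 := (SetLike.ext_iff.mp grange0 (bch0 ρ F.d0 x)).mp hm
      exact (SetLike.ext_iff.mp F'.range_d0 (bch0 ρ F.d0 x)).mpr hm2)
  -- the self chain map s := β ∘ α - id
  set s : ∀ j, (F'.B j →₀ MvPolynomial (↥P' × Q) K) →ₗ[MvPolynomial (↥P' × Q) K]
      (F'.B j →₀ MvPolynomial (↥P' × Q) K) :=
    fun j => (β j).comp (α j) - LinearMap.id with hsdef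
  have hs0 : ∀ x, F'.d0 (s 0 x) = 0 := by
    intro x
    have hx : s 0 x = β 0 (α 0 x) - x := rfl
    rw [hx, map_sub]
    have h1 : F'.d0 (β 0 (α 0 x)) = bch0 ρ F.d0 (α 0 x) := LinearMap.congr_fun hβ0 (α 0 x)
    have h2 : bch0 ρ F.d0 (α 0 x) = F'.d0 x := LinearMap.congr_fun hα0 x
    rw [h1, h2, sub_self]
  have hscomm : ∀ j, (F'.d j).comp (s (j+1)) = (s j).comp (F'.d j) := by
    intro j
    apply LinearMap.ext
    intro x
    have hx : s (j+1) x = β (j+1) (α (j+1) x) - x := rfl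
    rw [LinearMap.comp_apply, hx, map_sub]
    have h1 : F'.d j (β (j+1) (α (j+1) x)) = β j (bch ρ (F.d j) (α (j+1) x)) := by
      have := LinearMap.congr_fun (hβc j) (α (j+1) x)
      rw [LinearMap.comp_apply, LinearMap.comp_apply] at this
      exact this
    have h2 : bch ρ (F.d j) (α (j+1) x) = α j (F'.d j x) := by
      have := LinearMap.congr_fun (hαc j) x
      rw [LinearMap.comp_apply, LinearMap.comp_apply] at this
      exact this
    rw [h1, h2]
    have hy : s j (F'.d j x) = β j (α j (F'.d j x)) - F'.d j x := rfl
    rw [LinearMap.comp_apply, hy]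
  have hcors := homotopy_decomp F'.B F'.d0 F'.d hDD' hE0' hEE' s hs0 hscomm
  -- bar everything down to K
  set ρK : MvPolynomial (↥P' × Q) K →+* K := constantCoeff with hρK
  have hbar_d : ∀ j, bch ρK (F'.d j) = 0 := by
    intro j
    exact bch_entries_zero ρK _ (fun a c => F'.min_d j a c)
  have hbar_s : ∀ j, bch ρK (s j) = 0 := by
    intro j
    obtain ⟨g, cor, hgc, hshape⟩ := hcors j
    have hcor0 : bch ρK cor = 0 := by
      cases j with
      | zero =>
        have : cor = 0 := hshape
        rw [this]
        exact bch_zero ρK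
      | succ jj =>
        obtain ⟨pg, hpg⟩ := hshape
        rw [hpg, ← bch_comp, hbar_d jj, LinearMap.comp_zero]
    have h1 : bch ρK ((F'.d j).comp g + cor) = bch ρK (s j) := by rw [hgc]
    rw [bch_add, ← bch_comp, hbar_d j, LinearMap.zero_comp, hcor0, add_zero] at h1
    exact h1.symm
  -- injectivity at level i
  have hid : (bch ρK (β i)).comp (bch ρK (α i)) = LinearMap.id := by
    have h1 : (β i).comp (α i) = s i + LinearMap.id := by
      show (β i).comp (α i) = ((β i).comp (α i) - LinearMap.id) + LinearMap.id
      abel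
    rw [bch_comp, h1, bch_add, hbar_s i, bch_id, zero_add]
  have hinj : Function.Injective (bch ρK (α i)) := by
    intro x y hxy
    have hx := LinearMap.congr_fun hid x
    have hy := LinearMap.congr_fun hid y
    rw [LinearMap.comp_apply, LinearMap.id_apply] at hx hy
    rw [← hx, ← hy, hxy]
  exact card_le_of_inj_linear (bch ρK (α i)) hinj
end
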